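/- arXiv:2304.01278 — 3 statements merged into one kernel-verified Lean document; each statement's English description precedes it below -/
import Mathlib

section
/- For every nondeterministic Büchi automaton A over a finite alphabet Σ there exists a deterministic Büchi automaton D over Σ such that J(A) = J(D). -/
open scoped Classical

/-- A (nondeterministic) Büchi automaton over alphabet `A`, with a finite state set. -/
structure BuchiAutomaton (A : Type) : Type 1 where
  Q : Type
  fin : Fintype Q
  step : Q → A → Set Q
  init : Set Q
  accept : Set Q

attribute [instance] BuchiAutomaton.fin

/-- A run of the automaton on an infinite word. -/
def BuchiAutomaton.IsRun {A : Type} (M : BuchiAutomaton A) (w : ℕ → A) (ρ : ℕ → M.Q) : Prop :=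
  ρ 0 ∈ M.init ∧ ∀ i, ρ (i + 1) ∈ M.step (ρ i) (w i)

/-- The language of a Büchi automaton: words admitting a run visiting the accepting set
infinitely often. -/
def BuchiAutomaton.lang {A : Type} (M : BuchiAutomaton A) : Set (ℕ → A) :=
  {w | ∃ ρ, M.IsRun w ρ ∧ ∀ n, ∃ m, n ≤ m ∧ ρ m ∈ M.accept}

/-- A Büchi automaton is deterministic if it has a unique initial state and
every transition set is a singleton. -/
def BuchiAutomaton.Deterministic {A : Type} (M : BuchiAutomaton A) : Prop :=
  (∃ q, M.init = {q}) ∧ ∀ q a, ∃ p, M.step q a = {p}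

/-- Parikh image of an infinite word: number of occurrences of each letter (`⊤` if infinite). -/
noncomputable def parikhInf {A : Type} (w : ℕ → A) : A → ℕ∞ :=
  fun a => {i : ℕ | w i = a}.encard

/-- The jumping language of a Büchi automaton. -/
def JumpLang {A : Type} (M : BuchiAutomaton A) : Set (ℕ → A) :=
  {w | ∃ w', parikhInf w' = parikhInf w ∧ w' ∈ M.lang}

/-- Number of occurrences of letter `a` in the `i`-th window of size `k` of `w`. -/
noncomputable def winCount {A : Type} (w : ℕ → A) (k i : ℕ) (a : A) : ℕ :=
  {j : ℕ | k * i ≤ j ∧ j < k * i + k ∧ w j = a}.ncard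

/-- `w` and `w'` are `k`-window permutations of each other. -/
def KWinPerm {A : Type} (k : ℕ) (w w' : ℕ → A) : Prop :=
  ∀ i a, winCount w k i a = winCount w' k i a

/-- The `k`-window jumping language of a Büchi automaton. -/
def KWinLang {A : Type} (M : BuchiAutomaton A) (k : ℕ) : Set (ℕ → A) :=
  {w | ∃ w', KWinPerm k w' w ∧ w' ∈ M.lang}

/-- The `∃`-window jumping language of a Büchi automaton. -/
def EWinLang {A : Type} (M : BuchiAutomaton A) : Set (ℕ → A) :=
  {w | ∃ k, 1 ≤ k ∧ ∃ w', KWinPerm k w' w ∧ w' ∈ M.lang}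

/-- Linear subsets of `ℕ^A`. -/
def IsLinearSetNat {A : Type} (R : Set (A → ℕ)) : Prop :=
  ∃ (b : A → ℕ) (P : Finset (A → ℕ)),
    R = {v | ∃ c : (A → ℕ) → ℕ, v = b + ∑ p ∈ P, c p • p}

/-- Semilinear sets: finite unions of linear sets. -/
def IsSemilinearSetNat {A : Type} (R : Set (A → ℕ)) : Prop :=
  ∃ (n : ℕ) (f : Fin n → Set (A → ℕ)), (∀ i, IsLinearSetNat (f i)) ∧ R = ⋃ i, f i

/-- A mask: a vector over `{0,∞}` with at least one `∞` coordinate. -/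
def IsMask {A : Type} (m : A → ℕ∞) : Prop :=
  (∀ a, m a = 0 ∨ m a = ⊤) ∧ ∃ a, m a = ⊤

/-- Adding a mask to a vector of naturals. -/
def maskAdd {A : Type} (x : A → ℕ) (m : A → ℕ∞) : A → ℕ∞ :=
  fun a => (x a : ℕ∞) + m a

/-- Adding a mask to a set of vectors, `R + m`. -/
def maskAddSet {A : Type} (R : Set (A → ℕ)) (m : A → ℕ∞) : Set (A → ℕ∞) :=
  (fun x => maskAdd x m) '' R

/-- `𝕄^A`: extended-natural vectors with at least one `∞` coordinate. -/
def MVecs (A : Type) : Set (A → ℕ∞) := {v | ∃ a, v a = ⊤}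

/-- Masked semilinear set: a union `⋃_m (S_m + m)` over all masks `m`, with each `S_m`
semilinear. -/
def IsMaskedSemilinear {A : Type} (S : Set (A → ℕ∞)) : Prop :=
  ∃ F : (A → ℕ∞) → Set (A → ℕ),
    (∀ m, IsMask m → IsSemilinearSetNat (F m)) ∧
    S = ⋃ m ∈ {m' : A → ℕ∞ | IsMask m'}, maskAddSet (F m) m

/-- `R` is `m`-oblivious: membership only depends on the `m`-equivalence class. -/
def MOblivious {A : Type} (m : A → ℕ∞) (R : Set (A → ℕ)) : Prop :=
  ∀ u v : A → ℕ, maskAdd u m = maskAdd v m → (u ∈ R ↔ v ∈ R)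

/-- `E_m`: unit vectors at the `∞` coordinates of the mask `m`. -/
noncomputable def maskUnits {A : Type} [Fintype A] [DecidableEq A] (m : A → ℕ∞) :
    Finset (A → ℕ) :=
  (Finset.univ.filter (fun a => m a = ⊤)).image (fun a => Pi.single a 1)

/-- `R` is in canonical `m`-oblivious form. -/
def CanonicalOblivious {A : Type} [Fintype A] [DecidableEq A] (m : A → ℕ∞)
    (R : Set (A → ℕ)) : Prop :=
  ∃ (n : ℕ) (b : Fin n → (A → ℕ)) (P : Fin n → Finset (A → ℕ)),
    (∀ i a, m a = ⊤ → b i a = 0) ∧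
    (∀ i p, p ∈ P i → ∀ a, m a = ⊤ → p a = 0) ∧
    R = ⋃ i, {v | ∃ c : (A → ℕ) → ℕ, v = b i + ∑ p ∈ (P i ∪ maskUnits m), c p • p}

namespace JD
variable {A : Type}

/-- finite-word multi-step relation -/
inductive Steps (M : BuchiAutomaton A) : M.Q → List A → M.Q → Prop
  | nil (p : M.Q) : Steps M p [] p
  | cons {p p' r : M.Q} {a : A} {l : List A} :
      p' ∈ M.step p a → Steps M p' l r → Steps M p (a :: l) r

lemma Steps.append {M : BuchiAutomaton A} {p q r : M.Q} {u v : List A}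
    (h1 : Steps M p u q) (h2 : Steps M q v r) : Steps M p (u ++ v) r := by
  induction h1 with
  | nil => simpa
  | cons hs _ ih => exact Steps.cons hs (ih h2)

def listOf (w : ℕ → A) (N : ℕ) : List A := List.ofFn fun k : Fin N => w k

@[simp] lemma listOf_length (w : ℕ → A) (N : ℕ) : (listOf w N).length = N := by
  simp [listOf]

lemma listOf_getElem (w : ℕ → A) (N : ℕ) (i : ℕ) (h : i < (listOf w N).length) :
    (listOf w N)[i] = w i := by
  simp [listOf]

lemma listOf_succ (w : ℕ → A) (N : ℕ) :
    listOf w (N + 1) = listOf w N ++ [w N] := by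
  rw [listOf, listOf, List.ofFn_succ']
  simp [Fin.castSucc]

/-- segment w[i, j) -/
def seg (w : ℕ → A) (i j : ℕ) : List A := listOf (fun k => w (i + k)) (j - i)

lemma seg_self (w : ℕ → A) (i : ℕ) : seg w i i = [] := by simp [seg, listOf]

lemma seg_succ (w : ℕ → A) {i j : ℕ} (h : i ≤ j) :
    seg w i (j + 1) = seg w i j ++ [w j] := by
  have : j + 1 - i = (j - i) + 1 := by omega
  rw [seg, this, listOf_succ]
  have h2 : i + (j - i) = j := by omega
  rw [h2]
  rfl

lemma Steps.snoc {M : BuchiAutomaton A} {p q r : M.Q} {u : List A} {a : A}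
    (h1 : Steps M p u q) (h2 : r ∈ M.step q a) : Steps M p (u ++ [a]) r :=
  h1.append (Steps.cons h2 (Steps.nil r))

lemma steps_of_run {M : BuchiAutomaton A} {w : ℕ → A} {ρ : ℕ → M.Q}
    (h : ∀ t, ρ (t + 1) ∈ M.step (ρ t) (w t)) {i j : ℕ} (hij : i ≤ j) :
    Steps M (ρ i) (seg w i j) (ρ j) := by
  induction j with
  | zero =>
    have : i = 0 := by omega
    subst this; rw [seg_self]; exact Steps.nil _
  | succ j ih =>
    rcases Nat.lt_or_ge i (j+1) with hlt | hge
    · have hij' : i ≤ j := by omega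
      rw [seg_succ w hij']
      exact (ih hij').snoc (h j)
    · have : i = j + 1 := by omega
      subst this; rw [seg_self]; exact Steps.nil _

/-- build a finite run function from Steps -/
lemma run_of_steps {M : BuchiAutomaton A} {p q : M.Q} {u : List A} (h : Steps M p u q) :
    ∃ f : ℕ → M.Q, f 0 = p ∧ f u.length = q ∧
      ∀ t (ht : t < u.length), f (t + 1) ∈ M.step (f t) (u[t]'ht) := by
  induction h with
  | nil p => exact ⟨fun _ => p, rfl, rfl, fun t ht => absurd ht (by simp)⟩
  | @cons p p' r a l hs _ ih =>
    obtain ⟨f, hf0, hfl, hfs⟩ := ih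
    refine ⟨fun t => if t = 0 then p else f (t - 1), by simp, by simp [hfl], ?_⟩
    intro t ht
    match t with
    | 0 => simpa [hf0] using hs
    | (t+1) =>
      simpa using hfs t (by simpa using ht)

lemma mod_succ {d m : ℕ} (hm : 0 < m) :
    (d + 1) % m = if d % m + 1 = m then 0 else d % m + 1 := by
  rcases Nat.eq_or_lt_of_le hm with h1 | h2
  · simp [← h1, Nat.mod_one]
  · have h1 : 1 % m = 1 := Nat.mod_eq_of_lt h2
    rw [Nat.add_mod, h1]
    rcases Nat.lt_or_ge (d % m + 1) m with h | h
    · rw [if_neg (by omega), Nat.mod_eq_of_lt h]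
    · have hr : d % m < m := Nat.mod_lt _ hm
      have he : d % m + 1 = m := by omega
      rw [if_pos he, he, Nat.mod_self]

/-- encard of occurrence positions below N equals list count -/
lemma encard_count (w : ℕ → A) (a : A) : ∀ N : ℕ,
    Set.encard {i | i < N ∧ w i = a} = ((listOf w N).count a : ℕ∞)
  | 0 => by
    have : {i | i < 0 ∧ w i = a} = (∅ : Set ℕ) := by ext i; simp
    simp [this, listOf]
  | (N+1) => by
    rw [listOf_succ, List.count_append]
    by_cases hN : w N = a
    · have hset : {i | i < N + 1 ∧ w i = a} = insert N {i | i < N ∧ w i = a} := by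
        ext i
        simp only [Set.mem_setOf_eq, Set.mem_insert_iff]
        constructor
        · rintro ⟨h1, h2⟩
          rcases Nat.lt_or_ge i N with h | h
          · exact Or.inr ⟨h, h2⟩
          · exact Or.inl (by omega)
        · rintro (rfl | ⟨h1, h2⟩)
          · exact ⟨Nat.lt_succ_self _, hN⟩
          · exact ⟨by omega, h2⟩
      rw [hset, Set.encard_insert_of_notMem (by simp), encard_count w a N]
      have : ([w N].count a) = 1 := by simp [hN]
      rw [this]
      push_cast
      ring
    · have hset : {i | i < N + 1 ∧ w i = a} = {i | i < N ∧ w i = a} := by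
        ext i
        simp only [Set.mem_setOf_eq]
        constructor
        · rintro ⟨h1, h2⟩
          have hiN : i ≠ N := fun he => hN (he ▸ h2)
          exact ⟨by omega, h2⟩
        · rintro ⟨h1, h2⟩; exact ⟨by omega, h2⟩
      have : ([w N].count a) = 0 := by
        simp [List.count_cons, hN]
      rw [hset, this, encard_count w a N]
      push_cast
      ring

lemma parikh_of_bound {w : ℕ → A} {a : A} {N : ℕ} (h : ∀ i, w i = a → i < N) :
    parikhInf w a = ((listOf w N).count a : ℕ∞) := by
  have hset : {i | w i = a} = {i | i < N ∧ w i = a} := by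
    ext i; simp only [Set.mem_setOf_eq]
    exact ⟨fun h2 => ⟨h i h2, h2⟩, fun h2 => h2.2⟩
  rw [parikhInf, hset, encard_count]

/-- infinite word `U` followed by `V` repeated forever -/
def wordOf (U V : List A) (hV : 0 < V.length) : ℕ → A := fun t =>
  if h : t < U.length then U[t] else V[(t - U.length) % V.length]'(Nat.mod_lt _ hV)

lemma wordOf_lt {U V : List A} {hV : 0 < V.length} {t : ℕ} (h : t < U.length) :
    wordOf U V hV t = U[t] := by simp [wordOf, h]

lemma wordOf_ge {U V : List A} {hV : 0 < V.length} {t : ℕ} (h : U.length ≤ t) :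
    wordOf U V hV t = V[(t - U.length) % V.length]'(Nat.mod_lt _ hV) := by
  simp [wordOf, Nat.not_lt.2 h]

lemma parikh_wordOf_mem {U V : List A} {hV : 0 < V.length} {a : A} (ha : a ∈ V) :
    parikhInf (wordOf U V hV) a = ⊤ := by
  obtain ⟨r, hr, hra⟩ := List.mem_iff_getElem.1 ha
  apply Set.encard_eq_top
  have hinj : Function.Injective fun k : ℕ => U.length + (k * V.length + r) := by
    intro k1 k2 h
    simp only at h
    have h2 : k1 * V.length = k2 * V.length := by omega
    exact Nat.eq_of_mul_eq_mul_right hV h2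
  apply Set.infinite_of_injective_forall_mem hinj
  intro k
  have h1 : U.length ≤ U.length + (k * V.length + r) := by omega
  simp only [Set.mem_setOf_eq]
  rw [wordOf_ge h1]
  have h2 : U.length + (k * V.length + r) - U.length = k * V.length + r := by omega
  have h3 : (k * V.length + r) % V.length = r := by
    rw [Nat.add_comm, Nat.add_mul_mod_self_right, Nat.mod_eq_of_lt hr]
  simp only [h2, h3]
  exact hra

lemma listOf_wordOf {U V : List A} {hV : 0 < V.length} :
    listOf (wordOf U V hV) U.length = U := by
  apply List.ext_getElem (by simp)
  intro i h1 h2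
  rw [listOf_getElem, wordOf_lt (by simpa using h1)]

lemma parikh_wordOf_not_mem {U V : List A} {hV : 0 < V.length} {a : A} (ha : a ∉ V) :
    parikhInf (wordOf U V hV) a = (U.count a : ℕ∞) := by
  have h := parikh_of_bound (w := wordOf U V hV) (a := a) (N := U.length) ?_
  · rwa [listOf_wordOf] at h
  · intro i hi
    by_contra hge
    rw [wordOf_ge (by omega)] at hi
    exact ha (hi ▸ List.getElem_mem _)

/-- the lasso word is accepted -/
lemma lasso_mem_lang {M : BuchiAutomaton A} {p0 q : M.Q} {u V : List A}
    (h0 : p0 ∈ M.init) (hu : Steps M p0 u q) (hv : Steps M q V q)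
    (hV : 0 < V.length) (hq : q ∈ M.accept) :
    wordOf u V hV ∈ M.lang := by
  obtain ⟨f, hf0, hfl, hfs⟩ := run_of_steps hu
  obtain ⟨g, hg0, hgl, hgs⟩ := run_of_steps hv
  refine ⟨fun t => if t < u.length then f t else g ((t - u.length) % V.length), ?_, ?_⟩
  · constructor
    · by_cases h : 0 < u.length
      · simpa [h, hf0] using h0
      · have hu0 : u.length = 0 := by omega
        have : u = [] := List.length_eq_zero_iff.1 hu0
        subst this
        cases hu
        simpa [hu0, hg0] using h0
    · intro t
      rcases Nat.lt_or_ge (t+1) u.length with h1 | h1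
      · have h2 : t < u.length := by omega
        simp only [if_pos h1, if_pos h2]
        rw [wordOf_lt h2]
        exact hfs t h2
      · rcases Nat.lt_or_ge t u.length with h2 | h2
        · -- t + 1 = u.length
          have h3 : t + 1 = u.length := by omega
          simp only [if_neg (Nat.not_lt.2 h1), if_pos h2]
          have h4 : (t + 1 - u.length) % V.length = 0 := by
            rw [h3]; simp
          rw [h4, hg0, ← hfl, ← h3]
          rw [wordOf_lt h2]
          exact hfs t h2
        · -- both in tail
          simp only [if_neg (Nat.not_lt.2 h1), if_neg (Nat.not_lt.2 h2)]
          have hd : t + 1 - u.length = (t - u.length) + 1 := by omega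
          rw [wordOf_ge h2, hd, mod_succ hV]
          have hstep := hgs _ (Nat.mod_lt (t - u.length) hV)
          by_cases hcase : (t - u.length) % V.length + 1 = V.length
          · rw [if_pos hcase, hg0]
            rw [hcase, hgl] at hstep
            exact hstep
          · rw [if_neg hcase]
            exact hstep
  · intro n
    refine ⟨u.length + n * V.length, ?_, ?_⟩
    · have : n * 1 ≤ n * V.length := Nat.mul_le_mul_left n hV
      omega
    · have h2 : ¬ (u.length + n * V.length < u.length) := by omega
      simp only [if_neg h2]
      rw [show u.length + n * V.length - u.length = n * V.length by omega,
        Nat.mul_mod_left, hg0]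
      exact hq

/-- pigeonhole for infinitely-often over a finite index -/
lemma pigeonhole {ι : Type} [Fintype ι] {P : ι → ℕ → Prop}
    (h : ∀ n, ∃ m, n ≤ m ∧ ∃ i, P i m) : ∃ i, ∀ n, ∃ m, n ≤ m ∧ P i m := by
  by_contra hc
  push_neg at hc
  choose f hf using hc
  obtain ⟨N, hN⟩ := Finset.exists_le (Finset.univ.image f)
  obtain ⟨m, hm, i, hP⟩ := h N
  exact hf i m (le_trans (hN (f i) (Finset.mem_image_of_mem f (Finset.mem_univ i))) hm) hP

set_option linter.unusedSectionVars false

variable [Fintype A]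

def Valid (M : BuchiAutomaton A) (q : M.Q) (B : Finset A) : Prop :=
  q ∈ M.accept ∧ B.Nonempty ∧
    ∀ b ∈ B, ∃ v : List A, v ≠ [] ∧ (∀ a ∈ v, a ∈ B) ∧ b ∈ v ∧ Steps M q v q

lemma seg_zero (w : ℕ → A) (j : ℕ) : seg w 0 j = listOf w j := by
  simp [seg, listOf]

@[simp] lemma seg_length (w : ℕ → A) (i j : ℕ) : (seg w i j).length = j - i := by
  simp [seg]

lemma seg_getElem (w : ℕ → A) (i j k : ℕ) (h : k < (seg w i j).length) :
    (seg w i j)[k] = w (i + k) := by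
  simp [seg, listOf]

lemma M_decomp {M : BuchiAutomaton A} {w' : ℕ → A} (hw : w' ∈ M.lang) :
    ∃ (q : M.Q) (B : Finset A), Valid M q B ∧
      ∃ (u : List A) (p0 : M.Q), p0 ∈ M.init ∧ Steps M p0 u q ∧
        (∀ a ∉ B, parikhInf w' a = (u.count a : ℕ∞)) ∧
        (∀ a ∈ B, parikhInf w' a = ⊤) := by
  obtain ⟨ρ, ⟨hρ0, hρs⟩, hacc⟩ := hw
  -- the set of letters occurring infinitely often
  set B : Finset A := Finset.univ.filter (fun a => parikhInf w' a = ⊤) with hB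
  have hmemB : ∀ a, a ∈ B ↔ parikhInf w' a = ⊤ := by
    intro a; simp [hB]
  -- a global bound for letters not in B
  have hbnd : ∀ a : A, ∃ N, a ∉ B → ∀ i, w' i = a → i < N := by
    intro a
    by_cases ha : a ∈ B
    · exact ⟨0, fun h => absurd ha h⟩
    · have hfin : {i | w' i = a}.Finite := by
        rw [← Set.not_infinite]
        intro hinf
        exact ha ((hmemB a).2 (Set.encard_eq_top hinf))
      obtain ⟨N, hN⟩ := hfin.bddAbove
      exact ⟨N + 1, fun _ i hi => by
        have := hN (Set.mem_setOf_eq ▸ hi : i ∈ {i | w' i = a})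
        omega⟩
  choose g hg using hbnd
  obtain ⟨N, hN⟩ := Finset.exists_le (Finset.univ.image g)
  have hNbnd : ∀ a ∉ B, ∀ i, w' i = a → i < N + 1 := by
    intro a ha i hi
    have h1 := hg a ha i hi
    have h2 := hN (g a) (Finset.mem_image_of_mem g (Finset.mem_univ a))
    omega
  -- B is nonempty
  have hBne : B.Nonempty := by
    by_contra hne
    have hall : ∀ a : A, {i | w' i = a}.Finite := by
      intro a
      rw [← Set.not_infinite]
      intro hinf
      exact hne ⟨a, (hmemB a).2 (Set.encard_eq_top hinf)⟩
    have huniv : (Set.univ : Set ℕ) = ⋃ a : A, {i | w' i = a} := by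
      ext i; simp
    have : (Set.univ : Set ℕ).Finite := by
      rw [huniv]; exact Set.finite_iUnion hall
    exact Set.infinite_univ this
  -- a state visited infinitely often in accept
  obtain ⟨q, hq⟩ := pigeonhole (P := fun (i : M.Q) m => ρ m ∈ M.accept ∧ ρ m = i)
    (fun n => by
      obtain ⟨m, hm1, hm2⟩ := hacc n
      exact ⟨m, hm1, ρ m, hm2, rfl⟩)
  have hqacc : q ∈ M.accept := by
    obtain ⟨m, _, h1, h2⟩ := hq 0
    exact h2 ▸ h1
  obtain ⟨m0, hm0ge, _, hm0q⟩ := hq (N + 1)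
  refine ⟨q, B, ⟨hqacc, hBne, ?_⟩, listOf w' m0, ρ 0, hρ0, ?_, ?_, fun a ha => (hmemB a).1 ha⟩
  · -- loops for each b in B
    intro b hb
    have hinf : {i | w' i = b}.Infinite := by
      rw [← Set.encard_eq_top_iff]
      exact (hmemB b).1 hb
    obtain ⟨i, hi, hgt⟩ := hinf.exists_gt m0
    obtain ⟨m2, hm2ge, _, hm2q⟩ := hq (i + 1)
    refine ⟨seg w' m0 m2, ?_, ?_, ?_, ?_⟩
    · have : (seg w' m0 m2).length = m2 - m0 := seg_length w' m0 m2
      intro hnil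
      rw [hnil] at this
      simp at this
      omega
    · intro a hav
      obtain ⟨k, hk, hka⟩ := List.mem_iff_getElem.1 hav
      rw [seg_getElem] at hka
      by_contra hanB
      have := hNbnd a hanB (m0 + k) hka
      omega
    · have hk : i - m0 < (seg w' m0 m2).length := by
        rw [seg_length]; omega
      have : (seg w' m0 m2)[i - m0] = b := by
        rw [seg_getElem]
        rw [show m0 + (i - m0) = i by omega]
        exact hi
      exact this ▸ List.getElem_mem hk
    · have := steps_of_run hρs (le_of_lt (by omega : m0 < m2))
      rwa [hm0q, hm2q] at this
  · have := steps_of_run hρs (Nat.zero_le m0)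
    rw [hm0q, seg_zero] at this
    exact this
  · intro a ha
    exact parikh_of_bound (fun i hi => lt_of_lt_of_le (hNbnd a ha i hi) hm0ge)

lemma M_compose {M : BuchiAutomaton A} {q : M.Q} {B : Finset A} (hv : Valid M q B)
    {p0 : M.Q} {u : List A} (h0 : p0 ∈ M.init) (hu : Steps M p0 u q) :
    ∃ w', w' ∈ M.lang ∧ (∀ a ∉ B, parikhInf w' a = (u.count a : ℕ∞)) ∧
      (∀ a ∈ B, parikhInf w' a = ⊤) := by
  obtain ⟨hqacc, hBne, hloop⟩ := hv
  choose F hF1 hF2 hF3 hF4 using hloop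
  -- total function version
  set G : A → List A := fun b => if hb : b ∈ B then F b hb else [] with hG
  set VV : List A := (B.toList.map G).flatten with hVV
  have hmemVV : ∀ a, a ∈ VV ↔ ∃ b, ∃ hb : b ∈ B, a ∈ F b hb := by
    intro a
    simp only [hVV, List.mem_flatten, List.mem_map]
    constructor
    · rintro ⟨l, ⟨b, hbl, rfl⟩, hal⟩
      have hb : b ∈ B := Finset.mem_toList.1 hbl
      refine ⟨b, hb, ?_⟩
      have hGb : G b = F b hb := dif_pos hb
      rw [hGb] at hal
      exact hal
    · rintro ⟨b, hb, hab⟩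
      refine ⟨G b, ⟨b, Finset.mem_toList.2 hb, rfl⟩, ?_⟩
      have : G b = F b hb := dif_pos hb
      rw [this]
      exact hab
  have hVVB : ∀ a ∈ VV, a ∈ B := by
    intro a ha
    obtain ⟨b, hb, hab⟩ := (hmemVV a).1 ha
    exact hF2 b hb a hab
  have hBVV : ∀ b ∈ B, b ∈ VV := by
    intro b hb
    exact (hmemVV b).2 ⟨b, hb, hF3 b hb⟩
  have hVVne : 0 < VV.length := by
    obtain ⟨b, hb⟩ := hBne
    exact List.length_pos_iff.2 (List.ne_nil_of_mem (hBVV b hb))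
  have hVVsteps : Steps M q VV q := by
    rw [hVV]
    have : ∀ L : List A, (∀ b ∈ L, b ∈ B) → Steps M q ((L.map G).flatten) q := by
      intro L
      induction L with
      | nil => intro _; exact Steps.nil q
      | cons b L ih =>
        intro hL
        have hb : b ∈ B := hL b List.mem_cons_self
        simp only [List.map_cons, List.flatten_cons]
        refine Steps.append ?_ (ih (fun c hc => hL c (List.mem_cons_of_mem b hc)))
        have : G b = F b hb := dif_pos hb
        rw [this]
        exact hF4 b hb
    exact this B.toList (fun b hb => Finset.mem_toList.1 hb)
  refine ⟨wordOf u VV hVVne, lasso_mem_lang h0 hu hVVsteps hVVne hqacc, ?_, ?_⟩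
  · intro a ha
    exact parikh_wordOf_not_mem (fun hmem => ha (hVVB a hmem))
  · intro a ha
    exact parikh_wordOf_mem (hBVV a ha)

section DFA

variable (M : BuchiAutomaton A) (B : Finset A)

/-- one free step via a letter of `B` -/
def BRel : M.Q → M.Q → Prop := fun x y => ∃ b ∈ B, y ∈ M.step x b

/-- reachability via letters of `B` -/
def BRT : M.Q → M.Q → Prop := Relation.ReflTransGen (BRel M B)

def close (S : Set M.Q) : Set M.Q := {p | ∃ x ∈ S, BRT M B x p}

def stepD (S : Set M.Q) (a : A) : Set M.Q :=
  {p | ∃ x ∈ S, ∃ y ∈ M.step x a, BRT M B y p}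

def dfaS0 : Set M.Q := close M B M.init

def dfaF (S : Set M.Q) (u : List A) : Set M.Q := u.foldl (stepD M B) S

def dfa (u : List A) : Set M.Q := dfaF M B (dfaS0 M B) u

def ClosedS (S : Set M.Q) : Prop := ∀ p ∈ S, ∀ p', BRT M B p p' → p' ∈ S

variable {M B}

lemma closedS_dfaS0 : ClosedS M B (dfaS0 M B) := by
  rintro p ⟨x, hx, hxp⟩ p' hpp'
  exact ⟨x, hx, hxp.trans hpp'⟩

lemma closedS_stepD {S : Set M.Q} (a : A) : ClosedS M B (stepD M B S a) := by
  rintro p ⟨x, hx, y, hy, hyp⟩ p' hpp'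
  exact ⟨x, hx, y, hy, hyp.trans hpp'⟩

lemma brt_of_b {x y : M.Q} {b : A} (hb : b ∈ B) (hy : y ∈ M.step x b) : BRT M B x y :=
  Relation.ReflTransGen.single ⟨b, hb, hy⟩

/-- erased-word completeness -/
lemma dfaF_complete : ∀ {u : List A} {p r : M.Q} {S : Set M.Q},
    Steps M p u r → p ∈ S → ClosedS M B S →
    r ∈ dfaF M B S (u.filter (fun a => decide (a ∉ B))) := by
  intro u
  induction u with
  | nil =>
    intro p r S h hp _
    cases h
    simpa [dfaF]
  | cons a u ih =>
    intro p r S h hp hcl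
    cases h with
    | cons hstep hrest =>
      rw [List.filter_cons]
      by_cases ha : a ∈ B
      · rw [if_neg (by simp [ha])]
        exact ih hrest (hcl p hp _ (brt_of_b ha hstep)) hcl
      · rw [if_pos (by simp [ha])]
        have hmem : _ ∈ stepD M B S a := ⟨p, hp, _, hstep, Relation.ReflTransGen.refl⟩
        exact ih hrest hmem (closedS_stepD a)

lemma dfa_complete {u : List A} {p0 q : M.Q} (h0 : p0 ∈ M.init) (hu : Steps M p0 u q) :
    q ∈ dfa M B (u.filter (fun a => decide (a ∉ B))) :=
  dfaF_complete hu ⟨p0, h0, Relation.ReflTransGen.refl⟩ closedS_dfaS0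

/-- BRT gives a finite word over B -/
lemma steps_of_brt {x y : M.Q} (h : BRT M B x y) :
    ∃ vb : List A, (∀ a ∈ vb, a ∈ B) ∧ Steps M x vb y := by
  induction h with
  | refl => exact ⟨[], by simp, Steps.nil x⟩
  | tail hxy hstep ih =>
    obtain ⟨vb, hvb, hsteps⟩ := ih
    obtain ⟨b, hb, hstep'⟩ := hstep
    refine ⟨vb ++ [b], ?_, hsteps.snoc hstep'⟩
    intro a ha
    rcases List.mem_append.1 ha with h | h
    · exact hvb a h
    · simp at h
      exact h ▸ hb

lemma count_eq_zero_of_all_mem {v : List A} {a : A} (hv : ∀ x ∈ v, x ∈ B) (ha : a ∉ B) :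
    v.count a = 0 :=
  List.count_eq_zero.2 (fun hmem => ha (hv a hmem))

/-- soundness of the DFA -/
lemma dfaF_sound : ∀ (u' : List A) (S : Set M.Q) (r : M.Q), r ∈ dfaF M B S u' →
    ∃ p ∈ S, ∃ v : List A, Steps M p v r ∧ ∀ a ∉ B, v.count a = u'.count a := by
  intro u'
  induction u' with
  | nil =>
    intro S r hr
    exact ⟨r, hr, [], Steps.nil r, by simp⟩
  | cons a u' ih =>
    intro S r hr
    obtain ⟨p1, hp1, v1, hsteps1, hcount1⟩ := ih (stepD M B S a) r hr
    obtain ⟨x, hx, y, hy, hyp⟩ := hp1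
    obtain ⟨vb, hvb, hvbsteps⟩ := steps_of_brt hyp
    refine ⟨x, hx, a :: (vb ++ v1), Steps.cons hy (hvbsteps.append hsteps1), ?_⟩
    intro c hc
    rw [List.count_cons, List.count_cons, List.count_append,
      count_eq_zero_of_all_mem hvb hc, hcount1 c hc]
    ring

lemma dfa_sound {u' : List A} {q : M.Q} (hq : q ∈ dfa M B u') :
    ∃ p0 ∈ M.init, ∃ u : List A, Steps M p0 u q ∧ ∀ a ∉ B, u.count a = u'.count a := by
  obtain ⟨p, hp, v, hsteps, hcount⟩ := dfaF_sound u' (dfaS0 M B) q hq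
  obtain ⟨x, hx, hxp⟩ := hp
  obtain ⟨vb, hvb, hvbsteps⟩ := steps_of_brt hxp
  refine ⟨x, hx, vb ++ v, hvbsteps.append hsteps, ?_⟩
  intro a ha
  rw [List.count_append, count_eq_zero_of_all_mem hvb ha, hcount a ha]
  ring

/-- counts are preserved by erasing B -/
lemma count_filter_not_mem {u : List A} {a : A} (ha : a ∉ B) :
    (u.filter (fun x => decide (x ∉ B))).count a = u.count a :=
  List.count_filter (by simpa using ha)

lemma mem_filter_not_mem {u : List A} {a : A} (ha : a ∈ u.filter (fun x => decide (x ∉ B))) :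
    a ∉ B := by
  have := List.of_mem_filter ha
  simpa using this

end DFA

section Auto

variable {M : BuchiAutomaton A}

structure Idx (M : BuchiAutomaton A) where
  q : M.Q
  B : Finset A
  valid : Valid M q B

noncomputable instance : Fintype (Idx M) :=
  Fintype.ofInjective (fun i : Idx M => (i.q, i.B))
    (by rintro ⟨q1, B1, v1⟩ ⟨q2, B2, v2⟩ h; simpa using h)

variable (i : Idx M)

noncomputable def lst : List A := i.B.toList

lemma lst_pos : 0 < (lst i).length := by
  rw [lst, Finset.length_toList]
  exact Finset.card_pos.2 i.valid.2.1

lemma mem_lst_iff (a : A) : a ∈ lst i ↔ a ∈ i.B := Finset.mem_toList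

noncomputable def sz : ℕ := (lst i).length

lemma sz_pos : 0 < sz i := lst_pos i

noncomputable def bone : A := (lst i)[0]'(lst_pos i)

lemma bone_mem : bone i ∈ i.B := (mem_lst_iff i _).1 (List.getElem_mem _)

/-- the tail period word -/
noncomputable def VL : List A := lst i ++ [bone i]

lemma VL_length : (VL i).length = sz i + 1 := by simp [VL, sz]

lemma VL_pos : 0 < (VL i).length := by rw [VL_length]; omega

lemma mem_VL_iff (a : A) : a ∈ VL i ↔ a ∈ i.B := by
  constructor
  · intro h
    rcases List.mem_append.1 h with h | h
    · exact (mem_lst_iff i a).1 h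
    · simp at h
      exact h ▸ bone_mem i
  · intro h
    exact List.mem_append.2 (Or.inl ((mem_lst_iff i a).2 h))

lemma VL_getElem_lt {r : ℕ} (hr : r < sz i) :
    (VL i)[r]'(by rw [VL_length]; omega) = (lst i)[r]'hr := by
  have hr' : r < (lst i).length := hr
  have h : r < (lst i ++ [bone i]).length := by simp; omega
  show (lst i ++ [bone i])[r]'h = (lst i)[r]'hr'
  rw [List.getElem_append]
  exact dif_pos hr'

lemma VL_getElem_last :
    (VL i)[sz i]'(by rw [VL_length]; omega) = bone i := by
  have h : sz i < (lst i ++ [bone i]).length := by simp [sz]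
  show (lst i ++ [bone i])[sz i]'h = bone i
  rw [List.getElem_append, dif_neg (by simp [sz])]
  simp [sz]

/-- state type of the component automaton -/
def StD : Type := (Set M.Q × Fin (sz i + 1) × Bool) ⊕ Unit

noncomputable instance : Fintype (StD i) := by
  unfold StD; infer_instance

def sink : StD i := Sum.inr ()

/-- deterministic transition of the component automaton -/
noncomputable def nxt (st : StD i) (a : A) : StD i :=
  match st with
  | Sum.inr _ => Sum.inr ()
  | Sum.inl (S, r, tl) =>
    if h : (r : ℕ) < sz i then
      if a = (lst i)[(r : ℕ)]'h then Sum.inl (S, ⟨(r : ℕ) + 1, by omega⟩, tl)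
      else Sum.inr ()
    else
      if tl then
        (if a = bone i then Sum.inl (S, ⟨0, by omega⟩, true) else Sum.inr ())
      else if a ∈ i.B then
        (if a = bone i ∧ i.q ∈ S then Sum.inl (S, ⟨0, by omega⟩, true) else Sum.inr ())
      else Sum.inl (stepD M i.B S a, ⟨0, by omega⟩, false)

noncomputable def dinit : StD i := Sum.inl (dfaS0 M i.B, ⟨0, by omega⟩, false)

def IsAcc (st : StD i) : Prop := ∃ S r, st = Sum.inl (S, r, true)

end Auto

variable {M : BuchiAutomaton A}

/-- the deterministic product automaton -/
noncomputable def Dprod (M : BuchiAutomaton A) : BuchiAutomaton A where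
  Q := ∀ i : Idx M, StD i
  fin := inferInstance
  step := fun x a => {fun i => nxt i (x i) a}
  init := {fun i => dinit i}
  accept := {x | ∃ i, IsAcc i (x i)}

lemma Dprod_det (M : BuchiAutomaton A) : (Dprod M).Deterministic :=
  ⟨⟨_, rfl⟩, fun q a => ⟨_, rfl⟩⟩

/-- the unique run of the product automaton -/
noncomputable def prun (M : BuchiAutomaton A) (w : ℕ → A) : ℕ → (Dprod M).Q
  | 0 => fun i => dinit i
  | (t+1) => fun i => nxt i (prun M w t i) (w t)

lemma isrun_prun (w : ℕ → A) : (Dprod M).IsRun w (prun M w) :=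
  ⟨rfl, fun _ => rfl⟩

lemma run_eq_prun {w : ℕ → A} {ρ : ℕ → (Dprod M).Q} (h : (Dprod M).IsRun w ρ) :
    ρ = prun M w := by
  funext t
  induction t with
  | zero => exact h.1
  | succ t ih =>
    have := h.2 t
    rw [ih] at this
    exact this

lemma lang_Dprod_iff {w : ℕ → A} :
    w ∈ (Dprod M).lang ↔ ∃ i : Idx M, ∀ n, ∃ m, n ≤ m ∧ IsAcc i (prun M w m i) := by
  constructor
  · rintro ⟨ρ, hrun, hacc⟩
    rw [run_eq_prun hrun] at hacc
    exact pigeonhole hacc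
  · rintro ⟨i, hi⟩
    refine ⟨prun M w, isrun_prun w, fun n => ?_⟩
    obtain ⟨m, hm, hacc⟩ := hi n
    exact ⟨m, hm, i, hacc⟩

noncomputable def blocks (i : Idx M) (u' : List A) : List A :=
  (u'.map (fun y => lst i ++ [y])).flatten

lemma blocks_cons (i : Idx M) (y : A) (u' : List A) :
    blocks i (y :: u') = (lst i ++ [y]) ++ blocks i u' := by
  simp [blocks]

lemma blocks_length (i : Idx M) (u' : List A) :
    (blocks i u').length = u'.length * (sz i + 1) := by
  induction u' with
  | nil => simp [blocks]
  | cons y u' ih =>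
    rw [blocks_cons, List.length_append, List.length_append, ih]
    show sz i + [y].length + u'.length * (sz i + 1) = (y :: u').length * (sz i + 1)
    simp only [List.length_nil, List.length_cons]
    ring

lemma blocks_getElem? (i : Idx M) (u' : List A) (j r : ℕ) (hj : j < u'.length)
    (hr : r ≤ sz i) :
    (blocks i u')[j * (sz i + 1) + r]? =
      some (if h : r < sz i then (lst i)[r]'h else u'[j]'hj) := by
  induction u' generalizing j with
  | nil => simp at hj
  | cons y u' ih =>
    have hlen : (lst i ++ [y]).length = sz i + 1 := by
      rw [List.length_append]
      rfl
    rw [blocks_cons]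
    rcases Nat.eq_zero_or_pos j with rfl | hjpos
    · simp only [Nat.zero_mul, Nat.zero_add]
      rw [List.getElem?_append, if_pos (show r < (lst i ++ [y]).length by omega)]
      by_cases h : r < sz i
      · have h' : r < (lst i).length := h
        rw [List.getElem?_append, if_pos h']
        rw [List.getElem?_eq_getElem h', dif_pos h]
        rfl
      · have hrs : r = sz i := by omega
        rw [List.getElem?_append, if_neg (by exact fun hc => h hc)]
        rw [dif_neg h]
        have h2 : r - (lst i).length = 0 := by
          have h3 : (lst i).length = sz i := rfl
          omega
        rw [h2]
        simp
    · obtain ⟨k, rfl⟩ := Nat.exists_eq_add_of_le hjpos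
      have hk : k < u'.length := by
        simp at hj
        omega
      have hidx : (1 + k) * (sz i + 1) + r = (sz i + 1) + (k * (sz i + 1) + r) := by ring
      rw [hidx]
      rw [List.getElem?_append, if_neg (by omega : ¬ ((sz i + 1) + (k * (sz i + 1) + r) < (lst i ++ [y]).length))]
      rw [hlen, show (sz i + 1) + (k * (sz i + 1) + r) - (sz i + 1) = k * (sz i + 1) + r by omega]
      rw [ih k hk]
      congr 1
      by_cases h : r < sz i
      · rw [dif_pos h, dif_pos h]
      · rw [dif_neg h, dif_neg h]
        have h4 : (1 + k) = k + 1 := by ring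
        simp [h4]

lemma getElem_of_getElem? {l : List A} {n : ℕ} {a : A} (h : l[n]? = some a)
    (hn : n < l.length) : l[n]'hn = a := by
  rw [List.getElem?_eq_getElem hn] at h
  exact Option.some.inj h

lemma blocks_count (i : Idx M) {a : A} (ha : a ∉ i.B) (u' : List A) :
    (blocks i u').count a = u'.count a := by
  induction u' with
  | nil => simp [blocks]
  | cons y u' ih =>
    rw [blocks_cons, List.count_append, List.count_append, List.count_cons, ih]
    have h0 : (lst i).count a = 0 :=
      List.count_eq_zero.2 (fun hm => ha ((mem_lst_iff i a).1 hm))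
    rw [h0, List.count_cons]
    simp
    ring

section Trans

variable (i : Idx M)

lemma nxt_lt (S : Set M.Q) (tl : Bool) (r : ℕ) (h : r < sz i) (hh : r < sz i + 1) (a : A)
    (ha : a = (lst i)[r]'h) :
    nxt i (Sum.inl (S, ⟨r, hh⟩, tl)) a = Sum.inl (S, ⟨r + 1, by omega⟩, tl) := by
  unfold nxt
  dsimp only
  simp only [dif_pos h]
  exact if_pos ha

lemma nxt_y (S : Set M.Q) (hh : sz i < sz i + 1) (a : A) (ha : a ∉ i.B) :
    nxt i (Sum.inl (S, ⟨sz i, hh⟩, false)) a =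
      Sum.inl (stepD M i.B S a, ⟨0, by omega⟩, false) := by
  unfold nxt
  dsimp only
  simp only [dif_neg (show ¬ sz i < sz i by omega), if_neg (show ¬ false = true by simp)]
  exact if_neg ha

lemma nxt_enter (S : Set M.Q) (hh : sz i < sz i + 1) (hqS : i.q ∈ S) :
    nxt i (Sum.inl (S, ⟨sz i, hh⟩, false)) (bone i) =
      Sum.inl (S, ⟨0, by omega⟩, true) := by
  unfold nxt
  dsimp only
  simp only [dif_neg (show ¬ sz i < sz i by omega), if_neg (show ¬ false = true by simp)]
  exact (if_pos (bone_mem i)).trans (if_pos ⟨trivial, hqS⟩)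

lemma nxt_tail_last (S : Set M.Q) (hh : sz i < sz i + 1) :
    nxt i (Sum.inl (S, ⟨sz i, hh⟩, true)) (bone i) =
      Sum.inl (S, ⟨0, by omega⟩, true) := by
  unfold nxt
  dsimp only
  simp only [dif_neg (show ¬ sz i < sz i by omega), if_pos (show true = true by simp), if_pos (show bone i = bone i from rfl)]
  exact (if_pos trivial).trans (if_pos trivial)

/-- inversion of a non-sink transition -/
lemma nxt_cases (S : Set M.Q) (tl : Bool) (r : Fin (sz i + 1)) (a : A) (st : StD i)
    (hst : nxt i (Sum.inl (S, r, tl)) a = st) (hsink : st ≠ sink i) :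
    (∃ h : (r : ℕ) < sz i, a = (lst i)[(r : ℕ)]'h ∧
        st = Sum.inl (S, ⟨(r : ℕ) + 1, by omega⟩, tl)) ∨
    ((r : ℕ) = sz i ∧ tl = true ∧ a = bone i ∧ st = Sum.inl (S, ⟨0, by omega⟩, true)) ∨
    ((r : ℕ) = sz i ∧ tl = false ∧ a ∉ i.B ∧
        st = Sum.inl (stepD M i.B S a, ⟨0, by omega⟩, false)) ∨
    ((r : ℕ) = sz i ∧ tl = false ∧ a = bone i ∧ i.q ∈ S ∧
        st = Sum.inl (S, ⟨0, by omega⟩, true)) := by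
  unfold nxt at hst
  dsimp only at hst
  by_cases h : (r : ℕ) < sz i
  · rw [dif_pos h] at hst
    by_cases ha : a = (lst i)[(r : ℕ)]'h
    · replace hst := (if_pos ha).symm.trans hst
      exact Or.inl ⟨h, ha, hst.symm⟩
    · replace hst := (if_neg ha).symm.trans hst
      exact absurd hst.symm hsink
  · have hr : (r : ℕ) = sz i := by omega
    rw [dif_neg h] at hst
    cases tl with
    | true =>
      simp only [if_pos (show true = true by simp)] at hst
      by_cases ha : a = bone i
      · replace hst := (if_pos ha).symm.trans hst
        exact Or.inr (Or.inl ⟨hr, rfl, ha, hst.symm⟩)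
      · replace hst := (if_neg ha).symm.trans hst
        exact absurd hst.symm hsink
    | false =>
      simp only [if_neg (show ¬ false = true by simp)] at hst
      by_cases hB : a ∈ i.B
      · replace hst := (if_pos hB).symm.trans hst
        by_cases hcond : a = bone i ∧ i.q ∈ S
        · replace hst := (if_pos hcond).symm.trans hst
          exact Or.inr (Or.inr (Or.inr ⟨hr, rfl, hcond.1, hcond.2, hst.symm⟩))
        · replace hst := (if_neg hcond).symm.trans hst
          exact absurd hst.symm hsink
      · replace hst := (if_neg hB).symm.trans hst
        exact Or.inr (Or.inr (Or.inl ⟨hr, rfl, hB, hst.symm⟩))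

lemma nxt_sink (a : A) : nxt i (sink i) a = sink i := rfl

end Trans

lemma getElem_congr_idx {l : List A} {n n' : ℕ} (h : n = n') (hn : n < l.length) :
    l[n]'hn = l[n']'(h ▸ hn) := by subst h; rfl

lemma VL_getElem_mod (i : Idx M) (r : ℕ) (hr : r ≤ sz i) :
    (VL i)[r % (sz i + 1)]'(by rw [VL_length]; exact Nat.mod_lt _ (by omega)) =
    (VL i)[r]'(by rw [VL_length]; omega) :=
  getElem_congr_idx (Nat.mod_eq_of_lt (by omega)) _

lemma stD_congr (i : Idx M) (S : Set M.Q) (tl : Bool) {a b : ℕ} (h : a = b)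
    (ha : a < sz i + 1) (hb : b < sz i + 1) :
    (Sum.inl (S, ⟨a, ha⟩, tl) : StD i) = Sum.inl (S, ⟨b, hb⟩, tl) := by
  subst h; rfl

lemma prun_succ_apply {w : ℕ → A} {t : ℕ} {i : Idx M} :
    prun M w (t + 1) i = nxt i (prun M w t i) (w t) := rfl

lemma component_complete (i : Idx M) (u' : List A) (hq : i.q ∈ dfa M i.B u')
    (hu' : ∀ a ∈ u', a ∉ i.B) :
    ∃ w'', w'' ∈ (Dprod M).lang ∧ (∀ a ∉ i.B, parikhInf w'' a = (u'.count a : ℕ∞)) ∧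
      (∀ a ∈ i.B, parikhInf w'' a = ⊤) := by
  have hVpos : 0 < (VL i).length := VL_pos i
  set w : ℕ → A := wordOf (blocks i u') (VL i) hVpos with hw
  have hlen : (blocks i u').length = u'.length * (sz i + 1) := blocks_length i u'
  have hmul : ∀ j r : ℕ, j < u'.length → r ≤ sz i →
      j * (sz i + 1) + r < u'.length * (sz i + 1) := by
    intro j r hj hr
    have h1 : (j + 1) * (sz i + 1) ≤ u'.length * (sz i + 1) :=
      Nat.mul_le_mul_right _ (by omega)
    have h2 : (j + 1) * (sz i + 1) = j * (sz i + 1) + (sz i + 1) := by ring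
    omega
  have hwlt : ∀ (j r : ℕ) (hj : j < u'.length) (hr : r ≤ sz i),
      w (j * (sz i + 1) + r) = if h : r < sz i then (lst i)[r]'h else u'[j]'hj := by
    intro j r hj hr
    have hb : j * (sz i + 1) + r < (blocks i u').length := by
      rw [hlen]; exact hmul j r hj hr
    rw [hw, wordOf_lt hb]
    exact getElem_of_getElem? (blocks_getElem? i u' j r hj hr) hb
  have hwge : ∀ d : ℕ, w (u'.length * (sz i + 1) + d) =
      (VL i)[d % (sz i + 1)]'(by rw [VL_length]; exact Nat.mod_lt d (by omega)) := by
    intro d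
    rw [hw, wordOf_ge (by rw [hlen]; omega)]
    exact getElem_congr_idx (by rw [hlen, VL_length, Nat.add_sub_cancel_left]) _
  -- within-block invariant
  have inner : ∀ (j : ℕ), j ≤ u'.length → ∀ (S : Set M.Q),
      prun M w (j * (sz i + 1)) i = Sum.inl (S, ⟨0, Nat.succ_pos _⟩, false) →
      ∀ (r : ℕ) (hr : r ≤ sz i),
        prun M w (j * (sz i + 1) + r) i = Sum.inl (S, ⟨r, Nat.lt_succ_of_le hr⟩, false) := by
    intro j hj S h0 r
    induction r with
    | zero => intro _; simpa using h0
    | succ r ih =>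
      intro hr
      have hr' : r ≤ sz i := by omega
      have hrlt : r < sz i := by omega
      have ht := ih hr'
      have hwt : w (j * (sz i + 1) + r) = (lst i)[r]'hrlt := by
        rcases Nat.lt_or_ge j u'.length with hjlt | hjge
        · rw [hwlt j r hjlt hr', dif_pos hrlt]
        · have hje : j = u'.length := by omega
          subst hje
          rw [hwge r, VL_getElem_mod i r hr', VL_getElem_lt i hrlt]
      have hkey : prun M w ((j * (sz i + 1) + r) + 1) i =
          Sum.inl (S, ⟨r + 1, by omega⟩, false) := by
        rw [prun_succ_apply, ht, hwt]
        exact nxt_lt i S false r hrlt (by omega) _ rfl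
      rw [show j * (sz i + 1) + (r + 1) = (j * (sz i + 1) + r) + 1 by omega]
      exact hkey
  -- block-start invariant
  have outer : ∀ j, j ≤ u'.length →
      prun M w (j * (sz i + 1)) i =
        Sum.inl (dfa M i.B (u'.take j), ⟨0, by omega⟩, false) := by
    intro j
    induction j with
    | zero =>
      intro _
      rw [show 0 * (sz i + 1) = 0 by omega]
      show dinit i = _
      rw [dinit]
      simp [dfa, dfaF]
      rfl
    | succ j ihj =>
      intro hj
      have hjlt : j < u'.length := by omega
      have hb := inner j (by omega) _ (ihj (by omega)) (sz i) le_rfl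
      have hwt : w (j * (sz i + 1) + sz i) = u'[j]'hjlt := by
        rw [hwlt j (sz i) hjlt le_rfl, dif_neg (lt_irrefl _)]
      have hsets : stepD M i.B (dfa M i.B (u'.take j)) (u'[j]'hjlt) =
          dfa M i.B (u'.take (j + 1)) := by
        rw [dfa, dfa, dfaF, dfaF, List.take_succ, List.getElem?_eq_getElem hjlt]
        rw [show (some (u'[j]'hjlt)).toList = [u'[j]'hjlt] from rfl, List.foldl_append]
        rfl
      have hstep : prun M w ((j * (sz i + 1) + sz i) + 1) i =
          Sum.inl (dfa M i.B (u'.take (j + 1)), ⟨0, by omega⟩, false) := by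
        rw [prun_succ_apply, hb, hwt, ← hsets]
        exact nxt_y i _ (by omega) _ (hu' _ (List.getElem_mem hjlt))
      rw [show (j + 1) * (sz i + 1) = (j * (sz i + 1) + sz i) + 1 by ring]
      exact hstep
  -- entering the tail
  have hentry : prun M w ((u'.length * (sz i + 1) + sz i) + 1) i =
      Sum.inl (dfa M i.B u', ⟨0, by omega⟩, true) := by
    have hb := inner u'.length le_rfl _ (outer u'.length le_rfl) (sz i) le_rfl
    rw [List.take_length] at hb
    have hwt : w (u'.length * (sz i + 1) + sz i) = bone i := by
      rw [hwge (sz i), VL_getElem_mod i (sz i) le_rfl, VL_getElem_last i]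
    rw [prun_succ_apply, hb, hwt]
    exact nxt_enter i _ (by omega) hq
  -- the tail invariant
  have tail : ∀ e, prun M w ((u'.length + 1) * (sz i + 1) + e) i =
      Sum.inl (dfa M i.B u', ⟨e % (sz i + 1), Nat.mod_lt e (by omega)⟩, true) := by
    intro e
    induction e with
    | zero =>
      rw [show (u'.length + 1) * (sz i + 1) + 0 = (u'.length * (sz i + 1) + sz i) + 1 by ring]
      rw [hentry]
      exact stD_congr i _ _ (Nat.zero_mod _).symm _ _
    | succ e ih =>
      rw [show (u'.length + 1) * (sz i + 1) + (e + 1) =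
        ((u'.length + 1) * (sz i + 1) + e) + 1 by ring]
      rw [prun_succ_apply, ih]
      have hwt : w ((u'.length + 1) * (sz i + 1) + e) =
          (VL i)[e % (sz i + 1)]'(by rw [VL_length]; exact Nat.mod_lt e (by omega)) := by
        rw [show (u'.length + 1) * (sz i + 1) + e =
          u'.length * (sz i + 1) + ((sz i + 1) + e) by ring]
        rw [hwge ((sz i + 1) + e)]
        exact getElem_congr_idx (Nat.add_mod_left _ _) _
      rw [hwt]
      by_cases hrl : e % (sz i + 1) < sz i
      · rw [VL_getElem_lt i hrl]
        rw [nxt_lt i (dfa M i.B u') true (e % (sz i + 1)) hrl (Nat.mod_lt e (by omega)) _ rfl]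
        refine stD_congr i _ _ ?_ _ _
        rw [mod_succ (show 0 < sz i + 1 by omega), if_neg (by omega)]
      · have hre : e % (sz i + 1) = sz i := by
          have := Nat.mod_lt e (show 0 < sz i + 1 by omega)
          omega
        have h1 : (Sum.inl (dfa M i.B u', ⟨e % (sz i + 1), Nat.mod_lt e (by omega)⟩, true)
            : StD i) = Sum.inl (dfa M i.B u', ⟨sz i, by omega⟩, true) :=
          stD_congr i _ _ hre _ _
        have h2 : (VL i)[e % (sz i + 1)]'(by rw [VL_length]; exact Nat.mod_lt e (by omega))
            = bone i := by
          rw [getElem_congr_idx hre _]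
          exact VL_getElem_last i
        rw [h1, h2, nxt_tail_last i _ (by omega)]
        refine stD_congr i _ _ ?_ _ _
        rw [mod_succ (show 0 < sz i + 1 by omega), if_pos (by omega)]
  -- acceptance
  refine ⟨w, lang_Dprod_iff.2 ⟨i, fun n => ⟨(u'.length + 1) * (sz i + 1) + n, by omega, ?_⟩⟩,
    ?_, ?_⟩
  · exact ⟨dfa M i.B u', _, tail n⟩
  · intro a ha
    have hnot : a ∉ VL i := fun hm => ha ((mem_VL_iff i a).1 hm)
    rw [hw, parikh_wordOf_not_mem hnot, blocks_count i ha u']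
  · intro a ha
    exact parikh_wordOf_mem ((mem_VL_iff i a).2 ha)

lemma dfa_take_succ {B : Finset A} (u' : List A) {j : ℕ} (hj : j < u'.length) :
    dfa M B (u'.take (j + 1)) = stepD M B (dfa M B (u'.take j)) (u'[j]'hj) := by
  rw [dfa, dfa, dfaF, dfaF, List.take_succ, List.getElem?_eq_getElem hj]
  rw [show (some (u'[j]'hj)).toList = [u'[j]'hj] from rfl, List.foldl_append]
  rfl

lemma stD_inl_val {i : Idx M} {S S' : Set M.Q} {r r' : Fin (sz i + 1)} {tl tl' : Bool}
    (h : (Sum.inl (S, r, tl) : StD i) = Sum.inl (S', r', tl')) :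
    S = S' ∧ (r : ℕ) = (r' : ℕ) ∧ tl = tl' := by
  have h2 := Sum.inl.inj h
  exact ⟨congrArg (fun p => p.1) h2, congrArg (fun p => (p.2.1 : Fin (sz i + 1)).val) h2,
    congrArg (fun p => p.2.2) h2⟩

lemma component_sound (i : Idx M) (w : ℕ → A)
    (H : ∀ n, ∃ m, n ≤ m ∧ IsAcc i (prun M w m i)) :
    ∃ u' : List A, i.q ∈ dfa M i.B u' ∧
      (∀ a ∉ i.B, parikhInf w a = (u'.count a : ℕ∞)) ∧
      (∀ a ∈ i.B, parikhInf w a = ⊤) := by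
  -- sink is absorbing, and never reached
  have hsinkf : ∀ t k, prun M w t i = sink i → prun M w (t + k) i = sink i := by
    intro t k ht
    induction k with
    | zero => exact ht
    | succ k ih =>
      rw [show t + (k + 1) = (t + k) + 1 by omega, prun_succ_apply, ih]
      rfl
  have hnos : ∀ t, prun M w t i ≠ sink i := by
    intro t ht
    obtain ⟨m, hm, S, r, hSr⟩ := H t
    have h2 := hsinkf t (m - t) ht
    rw [show t + (m - t) = m by omega] at h2
    rw [h2] at hSr
    cases hSr
  have hdecomp : ∀ t, ∃ S r tl, prun M w t i = Sum.inl (S, r, tl) := by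
    intro t
    rcases hpt : prun M w t i with st | u
    · obtain ⟨S, r, tl⟩ := st
      exact ⟨S, r, tl, rfl⟩
    · cases u
      exact absurd hpt (hnos t)
  -- slot invariant
  have hslot : ∀ t S r tl, prun M w t i = Sum.inl (S, r, tl) → (r : ℕ) = t % (sz i + 1) := by
    intro t
    induction t with
    | zero =>
      intro S r tl h
      have h2 : (Sum.inl (dfaS0 M i.B, ⟨0, Nat.succ_pos _⟩, false) : StD i)
          = Sum.inl (S, r, tl) := h
      obtain ⟨-, hr, -⟩ := stD_inl_val h2
      rw [← hr]
      simp
    | succ t ih =>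
      intro S r tl h
      obtain ⟨S0, r0, tl0, h0⟩ := hdecomp t
      have hr0 := ih S0 r0 tl0 h0
      have hstep : nxt i (Sum.inl (S0, r0, tl0)) (w t) = Sum.inl (S, r, tl) := by
        rw [← h, prun_succ_apply, h0]
      have hr0lt : (r0 : ℕ) < sz i + 1 := r0.isLt
      rcases nxt_cases i S0 tl0 r0 (w t) _ hstep (fun hc => by cases hc) with
        ⟨hlt, _, hout⟩ | ⟨hr, _, _, hout⟩ | ⟨hr, _, _, hout⟩ | ⟨hr, _, _, _, hout⟩
      · obtain ⟨-, hrv, -⟩ := stD_inl_val hout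
        rw [hrv]
        show (r0 : ℕ) + 1 = (t + 1) % (sz i + 1)
        rw [mod_succ (show 0 < sz i + 1 by omega), ← hr0, if_neg (by omega)]
      all_goals {
        obtain ⟨-, hrv, -⟩ := stD_inl_val hout
        rw [hrv]
        show (0 : ℕ) = (t + 1) % (sz i + 1)
        rw [mod_succ (show 0 < sz i + 1 by omega), ← hr0, if_pos (by omega)]
      }
  -- letters forced at non-final slots
  have hletter : ∀ t S (r : Fin (sz i + 1)) tl, prun M w t i = Sum.inl (S, r, tl) →
      ∀ h : (r : ℕ) < sz i, w t = (lst i)[(r : ℕ)]'h := by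
    intro t S r tl h hrlt
    have hstep : nxt i (Sum.inl (S, r, tl)) (w t) = prun M w (t + 1) i := by
      rw [prun_succ_apply, h]
    rcases nxt_cases i S tl r (w t) _ hstep (hnos (t + 1)) with
      ⟨h', hw', _⟩ | ⟨hr, _⟩ | ⟨hr, _⟩ | ⟨hr, _⟩
    · exact hw'
    all_goals omega
  have hletter_tail : ∀ t S (r : Fin (sz i + 1)), prun M w t i = Sum.inl (S, r, true) →
      (r : ℕ) = sz i → w t = bone i := by
    intro t S r h hrs
    have hstep : nxt i (Sum.inl (S, r, true)) (w t) = prun M w (t + 1) i := by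
      rw [prun_succ_apply, h]
    rcases nxt_cases i S true r (w t) _ hstep (hnos (t + 1)) with
      ⟨h', _, _⟩ | ⟨_, _, hw', _⟩ | ⟨_, hf, _⟩ | ⟨_, hf, _⟩
    · omega
    · exact hw'
    all_goals exact Bool.noConfusion hf
  -- y-slot case analysis
  have hy : ∀ t S (r : Fin (sz i + 1)), prun M w t i = Sum.inl (S, r, false) →
      (r : ℕ) = sz i →
      (w t ∉ i.B ∧ prun M w (t + 1) i =
          Sum.inl (stepD M i.B S (w t), ⟨0, Nat.succ_pos _⟩, false)) ∨
      (w t = bone i ∧ i.q ∈ S ∧ prun M w (t + 1) i =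
          Sum.inl (S, ⟨0, Nat.succ_pos _⟩, true)) := by
    intro t S r h hrs
    have hstep : nxt i (Sum.inl (S, r, false)) (w t) = prun M w (t + 1) i := by
      rw [prun_succ_apply, h]
    rcases nxt_cases i S false r (w t) _ hstep (hnos (t + 1)) with
      ⟨h', _, _⟩ | ⟨_, hf, _⟩ | ⟨_, _, hnB, hout⟩ | ⟨_, _, hbo, hqS, hout⟩
    · omega
    · exact Bool.noConfusion hf
    · exact Or.inl ⟨hnB, hout⟩
    · exact Or.inr ⟨hbo, hqS, hout⟩
  -- tail flag is absorbing
  have htl : ∀ t S r, prun M w t i = Sum.inl (S, r, true) →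
      ∀ k, ∃ S' r', prun M w (t + k) i = Sum.inl (S', r', true) := by
    intro t S r h k
    induction k with
    | zero => exact ⟨S, r, h⟩
    | succ k ih =>
      obtain ⟨S', r', h'⟩ := ih
      have hstep : nxt i (Sum.inl (S', r', true)) (w (t + k)) = prun M w (t + k + 1) i := by
        rw [prun_succ_apply, h']
      rcases nxt_cases i S' true r' (w (t + k)) _ hstep (hnos (t + k + 1)) with
        ⟨h'', _, hout⟩ | ⟨_, _, _, hout⟩ | ⟨_, hf, _⟩ | ⟨_, hf, _⟩
      · exact ⟨S', _, by rw [show t + (k+1) = t + k + 1 by omega]; exact hout⟩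
      · exact ⟨S', _, by rw [show t + (k+1) = t + k + 1 by omega]; exact hout⟩
      all_goals exact Bool.noConfusion hf
  -- first tail time
  have hex : ∃ t, ∃ S r, prun M w t i = Sum.inl (S, r, true) := by
    obtain ⟨m, _, S, r, h⟩ := H 0
    exact ⟨m, S, r, h⟩
  set n0 := Nat.find hex with hn0def
  obtain ⟨S2, r2, h2⟩ : ∃ S r, prun M w n0 i = Sum.inl (S, r, true) := Nat.find_spec hex
  have hmin : ∀ t < n0, ¬∃ S r, prun M w t i = Sum.inl (S, r, true) :=
    fun t ht => Nat.find_min hex ht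
  have hbody : ∀ t < n0, ∃ S r, prun M w t i = Sum.inl (S, r, false) := by
    intro t ht
    obtain ⟨S, r, tl, h⟩ := hdecomp t
    cases tl with
    | true => exact absurd ⟨S, r, h⟩ (hmin t ht)
    | false => exact ⟨S, r, h⟩
  have hn0pos : 0 < n0 := by
    rcases Nat.eq_zero_or_pos n0 with h0 | h0
    · rw [h0] at h2
      have h3 : (Sum.inl (dfaS0 M i.B, ⟨0, Nat.succ_pos _⟩, false) : StD i)
          = Sum.inl (S2, r2, true) := h2
      obtain ⟨-, -, hb⟩ := stD_inl_val h3
      exact Bool.noConfusion hb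
    · exact h0
  -- entry analysis
  obtain ⟨S1, r1, h1⟩ := hbody (n0 - 1) (by omega)
  have hr1 : (r1 : ℕ) = (n0 - 1) % (sz i + 1) := hslot _ _ _ _ h1
  have hentry := hy (n0 - 1) S1 r1 h1
  have hstep1 : prun M w (n0 - 1 + 1) i = prun M w n0 i := by
    rw [show n0 - 1 + 1 = n0 by omega]
  have hr1s : (r1 : ℕ) = sz i := by
    by_contra hne
    have hlt : (r1 : ℕ) < sz i := by
      have := r1.isLt
      omega
    -- then next state has flag false and r+1, but n0 has true flag
    have hw1 := hletter (n0 - 1) S1 r1 false h1 hlt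
    have : prun M w (n0 - 1 + 1) i = Sum.inl (S1, ⟨(r1 : ℕ) + 1, by omega⟩, false) := by
      rw [prun_succ_apply, h1, hw1]
      exact nxt_lt i S1 false (r1 : ℕ) hlt r1.isLt _ rfl
    rw [hstep1, h2] at this
    obtain ⟨-, -, hb⟩ := stD_inl_val this
    exact Bool.noConfusion hb
  rcases hentry hr1s with ⟨_, hout⟩ | ⟨hbo1, hqS1, hout⟩
  · rw [hstep1, h2] at hout
    obtain ⟨-, -, hb⟩ := stD_inl_val hout
    exact Bool.noConfusion hb
  rw [hstep1, h2] at hout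
  obtain ⟨hS2, hr2, -⟩ := stD_inl_val hout
  -- n0 is a multiple of sz i + 1
  have hn0mod : n0 % (sz i + 1) = 0 := by
    have hv := hslot n0 S2 r2 true h2
    rw [hr2] at hv
    exact hv.symm
  have hdvd : (sz i + 1) ∣ n0 := Nat.dvd_of_mod_eq_zero hn0mod
  obtain ⟨k, hk⟩ := hdvd
  have hkpos : 0 < k := by
    rcases Nat.eq_zero_or_pos k with h0 | h0
    · rw [h0, Nat.mul_zero] at hk
      omega
    · exact h0
  set n := k - 1 with hndef
  have hn0eq : n0 = (n + 1) * (sz i + 1) := by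
    have hnk : n + 1 = k := by omega
    rw [hnk, hk]
    ring
  -- the letters at y-slots
  set u' : List A := listOf (fun j => w (j * (sz i + 1) + sz i)) n with hu'def
  have hu'len : u'.length = n := listOf_length _ n
  -- within-block invariant (flag false is preserved while r < sz)
  have hinner : ∀ (j : ℕ) (S : Set M.Q),
      prun M w (j * (sz i + 1)) i = Sum.inl (S, ⟨0, Nat.succ_pos _⟩, false) →
      ∀ (r : ℕ) (hr : r ≤ sz i),
        prun M w (j * (sz i + 1) + r) i = Sum.inl (S, ⟨r, Nat.lt_succ_of_le hr⟩, false) := by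
    intro j S h0 r
    induction r with
    | zero => intro _; simpa using h0
    | succ r ih =>
      intro hr
      have hr' : r ≤ sz i := by omega
      have hrlt : r < sz i := by omega
      have ht := ih hr'
      have hwt := hletter _ S _ false ht hrlt
      rw [show j * (sz i + 1) + (r + 1) = (j * (sz i + 1) + r) + 1 by omega,
        prun_succ_apply, ht, hwt]
      exact nxt_lt i S false r hrlt _ _ rfl
  -- block-start invariant
  have houter : ∀ j, j ≤ n →
      prun M w (j * (sz i + 1)) i =
        Sum.inl (dfa M i.B (u'.take j), ⟨0, Nat.succ_pos _⟩, false) := by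
    intro j
    induction j with
    | zero =>
      intro _
      rw [show 0 * (sz i + 1) = 0 by omega]
      show dinit i = _
      rw [dinit]
      simp [dfa, dfaF]
      rfl
    | succ j ihj =>
      intro hj
      have hjn : j < n := by omega
      have hb := hinner j _ (ihj (by omega)) (sz i) le_rfl
      have hyres := hy _ _ _ hb rfl
      have htlt : (j * (sz i + 1) + sz i) + 1 < n0 := by
        rw [hn0eq]
        have h1 : (j + 1) * (sz i + 1) ≤ n * (sz i + 1) :=
          Nat.mul_le_mul_right _ (by omega)
        have h2 : (j + 1) * (sz i + 1) = j * (sz i + 1) + (sz i + 1) := by ring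
        have h3 : n * (sz i + 1) < (n + 1) * (sz i + 1) := by
          have : n * (sz i + 1) + (sz i + 1) = (n + 1) * (sz i + 1) := by ring
          omega
        omega
      rcases hyres with ⟨hnB, hout⟩ | ⟨_, _, hout⟩
      · have hval : w (j * (sz i + 1) + sz i) = u'[j]'(by omega) :=
          (listOf_getElem (fun j => w (j * (sz i + 1) + sz i)) n j
            (by simpa using hjn)).symm
        have hsets : stepD M i.B (dfa M i.B (u'.take j)) (w (j * (sz i + 1) + sz i)) =
            dfa M i.B (u'.take (j + 1)) := by
          rw [hval, dfa_take_succ u' (by omega)]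
        rw [show (j + 1) * (sz i + 1) = (j * (sz i + 1) + sz i) + 1 by ring, hout, hsets]
      · -- premature tail entry: contradiction
        obtain ⟨S', r', hfalse⟩ := hbody _ htlt
        rw [hout] at hfalse
        obtain ⟨-, -, hb⟩ := stD_inl_val hfalse
        exact absurd hb Bool.noConfusion
  -- the state just before the tail
  have hfinal : prun M w (n * (sz i + 1) + sz i) i =
      Sum.inl (dfa M i.B u', ⟨sz i, Nat.lt_succ_of_le le_rfl⟩, false) := by
    have hb := hinner n _ (houter n le_rfl) (sz i) le_rfl
    rwa [List.take_of_length_le (by omega)] at hb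
  have hn0m1 : n0 - 1 = n * (sz i + 1) + sz i := by
    rw [hn0eq]; ring_nf; omega
  have hqdfa : i.q ∈ dfa M i.B u' := by
    have := h1
    rw [hn0m1] at this
    rw [hfinal] at this
    obtain ⟨hSeq, -, -⟩ := stD_inl_val this
    rw [← hSeq] at hqS1
    exact hqS1
  -- y-slot letters are not in B
  have hW2 : ∀ j, j < n → w (j * (sz i + 1) + sz i) ∉ i.B := by
    intro j hjn
    have hb := hinner j _ (houter j (by omega)) (sz i) le_rfl
    have hyres := hy _ _ _ hb rfl
    have htlt : (j * (sz i + 1) + sz i) + 1 < n0 := by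
      rw [hn0eq]
      have h1 : (j + 1) * (sz i + 1) ≤ n * (sz i + 1) :=
        Nat.mul_le_mul_right _ (by omega)
      have h2 : (j + 1) * (sz i + 1) = j * (sz i + 1) + (sz i + 1) := by ring
      have h3 : n * (sz i + 1) + (sz i + 1) = (n + 1) * (sz i + 1) := by ring
      omega
    rcases hyres with ⟨hnB, _⟩ | ⟨_, _, hout⟩
    · exact hnB
    · obtain ⟨S', r', hfalse⟩ := hbody _ htlt
      rw [hout] at hfalse
      obtain ⟨-, -, hb⟩ := stD_inl_val hfalse
      exact absurd hb Bool.noConfusion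
  -- all letters in the body at non-y slots are in B
  have hbodyB : ∀ t, t < n0 → t % (sz i + 1) < sz i → w t ∈ i.B := by
    intro t ht hr
    obtain ⟨S, r, h⟩ := hbody t ht
    have hrv : (r : ℕ) = t % (sz i + 1) := hslot _ _ _ _ h
    have hwt := hletter t S r false h (by omega)
    rw [hwt]
    exact (mem_lst_iff i _).1 (List.getElem_mem _)
  -- all letters in the tail are in B
  have htailB : ∀ t, n0 ≤ t → w t ∈ i.B := by
    intro t ht
    obtain ⟨S', r', h'⟩ := htl n0 S2 r2 h2 (t - n0)
    rw [show n0 + (t - n0) = t by omega] at h'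
    have hrv : (r' : ℕ) = t % (sz i + 1) := hslot _ _ _ _ h'
    by_cases hlt : (r' : ℕ) < sz i
    · rw [hletter t S' r' true h' hlt]
      exact (mem_lst_iff i _).1 (List.getElem_mem _)
    · have hrs : (r' : ℕ) = sz i := by
        have := r'.isLt
        omega
      rw [hletter_tail t S' r' h' hrs]
      exact bone_mem i
  refine ⟨u', hqdfa, ?_, ?_⟩
  · -- letters not in B occur exactly at y-slots with value a
    intro a ha
    have hset : {t | w t = a} =
        (fun j => j * (sz i + 1) + sz i) '' {j | j < n ∧ w (j * (sz i + 1) + sz i) = a} := by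
      ext t
      simp only [Set.mem_setOf_eq, Set.mem_image]
      constructor
      · intro hwt
        have htn0 : t < n0 := by
          by_contra hge
          exact ha (hwt ▸ htailB t (by omega))
        have hrs : t % (sz i + 1) = sz i := by
          by_contra hne
          have hlt : t % (sz i + 1) < sz i := by
            have := Nat.mod_lt t (show 0 < sz i + 1 by omega)
            omega
          exact ha (hwt ▸ hbodyB t htn0 hlt)
        have hdm := Nat.div_add_mod t (sz i + 1)
        set j := t / (sz i + 1) with hjdef
        have hcomm : (sz i + 1) * j = j * (sz i + 1) := Nat.mul_comm _ _
        have hteq : t = j * (sz i + 1) + sz i := by omega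
        have hjle : j < n + 1 := by
          rw [Nat.div_lt_iff_lt_mul (show 0 < sz i + 1 by omega)]
          rw [hn0eq] at htn0
          omega
        have hjn : j < n := by
          rcases Nat.lt_or_ge j n with h | h
          · exact h
          · have hje : j = n := by omega
            rw [hje] at hteq
            rw [← hn0m1] at hteq
            rw [hteq] at hwt
            have hwb := hbo1
            rw [hwt] at hwb
            exact absurd (hwb ▸ bone_mem i : a ∈ i.B) ha
        exact ⟨j, ⟨hjn, hteq ▸ hwt⟩, hteq.symm⟩
      · rintro ⟨j, ⟨hjn, hja⟩, rfl⟩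
        exact hja
    show Set.encard {t | w t = a} = _
    rw [hset]
    have hinj : Set.InjOn (fun j => j * (sz i + 1) + sz i)
        {j | j < n ∧ w (j * (sz i + 1) + sz i) = a} := by
      intro x _ y _ hxy
      have hxy' : x * (sz i + 1) + sz i = y * (sz i + 1) + sz i := hxy
      have : x * (sz i + 1) = y * (sz i + 1) := by omega
      exact Nat.eq_of_mul_eq_mul_right (by omega) this
    rw [hinj.encard_image]
    rw [encard_count (fun j => w (j * (sz i + 1) + sz i)) a n]
  · -- letters in B occur infinitely often
    intro a ha
    obtain ⟨r0, hr0lt, hr0⟩ := List.mem_iff_getElem.1 ((mem_lst_iff i a).2 ha)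
    have hsz : (lst i).length = sz i := rfl
    apply Set.encard_eq_top
    have hinj : Function.Injective (fun k : ℕ => n0 + (k * (sz i + 1) + r0)) := by
      intro k1 k2 h
      simp only [Nat.add_right_cancel_iff] at h
      have : k1 * (sz i + 1) = k2 * (sz i + 1) := by omega
      exact Nat.eq_of_mul_eq_mul_right (by omega) this
    apply Set.infinite_of_injective_forall_mem hinj
    intro k
    simp only [Set.mem_setOf_eq]
    set t := n0 + (k * (sz i + 1) + r0) with htdef
    obtain ⟨S', r', h'⟩ := htl n0 S2 r2 h2 (k * (sz i + 1) + r0)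
    have hrv : (r' : ℕ) = t % (sz i + 1) := hslot _ _ _ _ h'
    have hmod : t % (sz i + 1) = r0 := by
      rw [htdef, hn0eq]
      rw [show (n + 1) * (sz i + 1) + (k * (sz i + 1) + r0) =
        r0 + (n + 1 + k) * (sz i + 1) by ring]
      rw [Nat.add_mul_mod_self_right]
      exact Nat.mod_eq_of_lt (by omega)
    have hlt : (r' : ℕ) < sz i := by omega
    have := hletter t S' r' true h' hlt
    rw [this]
    have : (r' : ℕ) = r0 := by omega
    subst this
    exact hr0


theorem main_thm (A : Type) [Fintype A] (M : BuchiAutomaton A) :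
    ∃ D : BuchiAutomaton A, D.Deterministic ∧ JumpLang M = JumpLang D := by
  refine ⟨Dprod M, Dprod_det M, ?_⟩
  ext w
  simp only [JumpLang, Set.mem_setOf_eq]
  constructor
  · rintro ⟨w', hps, hw'⟩
    obtain ⟨q, B, hvalid, u, p0, hp0, hu, hcnt, htop⟩ := M_decomp hw'
    have hq : (Idx.mk q B hvalid).q ∈
        dfa M (Idx.mk q B hvalid).B (u.filter (fun a => decide (a ∉ B))) :=
      dfa_complete hp0 hu
    obtain ⟨w'', hw''lang, hcnt'', htop''⟩ :=
      component_complete (Idx.mk q B hvalid) _ hq (fun a ha => mem_filter_not_mem ha)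
    refine ⟨w'', ?_, hw''lang⟩
    funext a
    rw [← hps]
    by_cases ha : a ∈ B
    · rw [htop'' a ha, htop a ha]
    · rw [hcnt'' a ha, hcnt a ha, count_filter_not_mem ha]
  · rintro ⟨w'', hps, hw''⟩
    obtain ⟨i, hi⟩ := lang_Dprod_iff.1 hw''
    obtain ⟨u', hq, hcnt, htop⟩ := component_sound i w'' hi
    obtain ⟨p0, hp0, u, hu, hucnt⟩ := dfa_sound hq
    obtain ⟨w', hw'lang, hcnt', htop'⟩ := M_compose i.valid hp0 hu
    refine ⟨w', ?_, hw'lang⟩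
    funext a
    rw [← hps]
    by_cases ha : a ∈ i.B
    · rw [htop' a ha, htop a ha]
    · rw [hcnt' a ha, hcnt a ha, hucnt a ha]

end JD

/-- Every jumping language of a Büchi automaton is the jumping language of a
deterministic Büchi automaton. -/
theorem jumpLang_determinizable (A : Type) [Fintype A] (M : BuchiAutomaton A) :
    ∃ D : BuchiAutomaton A, D.Deterministic ∧ JumpLang M = JumpLang D :=
  JD.main_thm A M
end

section
/- Let ∪_m (S_m + m) be an oblivious masked union over a finite alphabet Σ, i.e., for every mask m the set S_m ⊆ ℕ^Σ is m-oblivious. Then 𝕄^Σ ∖ ∪_m (S_m + m) = ∪_m ((ℕ^Σ ∖ S_m) + m), where both unions range over all masks m of Σ. -/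
open scoped Classical

/-- The complement (within `𝕄^Σ`) of an oblivious masked union is obtained by
complementing componentwise, mask by mask. -/
theorem oblivious_masked_compl (A : Type) [Fintype A]
    (S : (A → ℕ∞) → Set (A → ℕ)) (hS : ∀ m, IsMask m → MOblivious m (S m)) :
    MVecs A \ (⋃ m ∈ {m' : A → ℕ∞ | IsMask m'}, maskAddSet (S m) m) =
      ⋃ m ∈ {m' : A → ℕ∞ | IsMask m'}, maskAddSet ((Set.univ : Set (A → ℕ)) \ S m) m := by
  have htop : ∀ (x : A → ℕ) (m : A → ℕ∞) (a : A), maskAdd x m a = ⊤ ↔ m a = ⊤ := by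
    intro x m a
    unfold maskAdd
    rw [ENat.add_eq_top]
    exact ⟨fun h => h.resolve_left (ENat.coe_ne_top _),
      Or.inr⟩
  ext v
  simp only [Set.mem_diff, Set.mem_iUnion, Set.mem_setOf_eq, maskAddSet, Set.mem_image,
    not_exists]
  constructor
  · rintro ⟨⟨a0, ha0⟩, hnot⟩
    set m : A → ℕ∞ := fun a => if v a = ⊤ then ⊤ else 0 with hm
    have hmask : IsMask m := by
      refine ⟨fun a => ?_, ⟨a0, by simp [hm, ha0]⟩⟩
      by_cases h : v a = ⊤ <;> simp [hm, h]
    set x : A → ℕ := fun a => WithTop.untopD 0 (v a) with hx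
    have hxm : maskAdd x m = v := by
      funext a
      by_cases h : v a = ⊤
      · simp [maskAdd, hx, hm, h]
      · obtain ⟨n, hn⟩ := WithTop.ne_top_iff_exists.mp h
        show (↑(WithTop.untopD 0 (v a)) + if v a = ⊤ then ⊤ else 0) = v a
        rw [if_neg h, add_zero]; exact ENat.natCast_toNat h
    exact ⟨m, hmask, x, ⟨⟨Set.mem_univ x, fun hxS => hnot m hmask x ⟨hxS, hxm⟩⟩, hxm⟩⟩
  · rintro ⟨m, hmask, x, ⟨⟨-, hxS⟩, hxm⟩⟩
    obtain ⟨a0, ha0⟩ := hmask.2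
    have hvM : ∃ a, v a = ⊤ := ⟨a0, by rw [← hxm]; exact (htop x m a0).mpr ha0⟩
    refine ⟨hvM, ?_⟩
    simp only [not_and]
    intro m' hm' y hyS hym
    have hmm : m' = m := by
      funext a
      have h1 : m' a = ⊤ ↔ m a = ⊤ := by
        rw [← htop y m' a, ← htop x m a, hxm, hym]
      rcases hm'.1 a with h | h <;> rcases hmask.1 a with h2 | h2 <;>
        simp_all
    rw [hmm] at hym hyS
    exact hxS ((hS m hmask y x (hym.trans hxm.symm)).mp hyS)
end

section
/- Let A be the Büchi automaton over Σ = {a,b,c} with states {q₀,q₁,q₂}, initial state q₀, accepting set {q₂}, and transitions δ(q₀,a) = {q₁}, δ(q₁,b) = {q₀}, δ(q₀,c) = {q₂}, δ(q₂,c) = {q₂}, with all other δ-values empty. Then J(A) = {u·c^ω : u ∈ {a,b,c}^* and the number of occurrences of a in u equals the number of occurrences of b in u}, and this language is not ω-regular: there is no Büchi automaton B with L(B) = J(A). -/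
open scoped Classical

/-- The Büchi automaton of Statement 19 over `Σ = {a,b,c}` (`a = 0`, `b = 1`, `c = 2`), with
`L(A) = (ab)^* c^ω`. -/
def A19 : BuchiAutomaton (Fin 3) where
  Q := Fin 3
  fin := inferInstance
  step q a :=
    if q = 0 ∧ a = 0 then {1}
    else if q = 1 ∧ a = 1 then {0}
    else if q = 0 ∧ a = 2 then {2}
    else if q = 2 ∧ a = 2 then {2}
    else ∅
  init := {0}
  accept := {2}

lemma A19_mem_empty' (x : A19.Q) :
    ¬ @Membership.mem (Fin 3) (Set (Fin 3)) (@Set.instMembership A19.Q) ∅ x := id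

lemma A19_mem_empty (x : Fin 3) :
    ¬ @Membership.mem (Fin 3) (Set (Fin 3)) (@Set.instMembership A19.Q) ∅ x := id

lemma A19_mem_single (x y : Fin 3) :
    @Membership.mem (Fin 3) (Set (Fin 3)) (@Set.instMembership A19.Q) {y} x ↔ x = y := Iff.rfl

lemma A19_mem_single' (x : A19.Q) (y : Fin 3) :
    @Membership.mem (Fin 3) (Set (Fin 3)) (@Set.instMembership A19.Q) {y} x ↔ x = y := Iff.rfl

def altL : ℕ → List (Fin 3)
  | 0 => []
  | n + 1 => 0 :: 1 :: altL n

lemma altL_length (n : ℕ) : (altL n).length = 2 * n := by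
  induction n with
  | zero => rfl
  | succ n ih => simp [altL, ih]; ring

lemma altL_count (n : ℕ) (x : Fin 3) :
    (altL n).count x = if x = 0 ∨ x = 1 then n else 0 := by
  induction n with
  | zero => simp [altL]
  | succ n ih =>
    fin_cases x <;> simp_all [altL, List.count_cons]

def wof (u : List (Fin 3)) : ℕ → Fin 3 := fun i => if h : i < u.length then u.get ⟨i, h⟩ else 2

lemma wof_altL (n : ℕ) (i : ℕ) :
    wof (altL n) i = if i < 2 * n then (if i % 2 = 0 then 0 else 1) else 2 := by
  induction n generalizing i with
  | zero => simp [wof, altL]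
  | succ n ih =>
    match i with
    | 0 => simp [wof, altL]
    | 1 =>
      have h1 : (1:ℕ) < 2 * (n+1) := by omega
      simp [wof, altL, h1]
    | (j + 2) =>
      have h1 : wof (altL (n+1)) (j+2) = wof (altL n) j := by
        show wof (0 :: 1 :: altL n) (j + 1 + 1) = _
        simp only [wof, List.length_cons]
        by_cases h : j < (altL n).length
        · rw [dif_pos (by omega : j + 1 + 1 < (altL n).length + 1 + 1), dif_pos h]
          simp [List.get]
        · rw [dif_neg (by omega), dif_neg h]
      rw [h1, ih]
      have h2 : (j + 2) % 2 = j % 2 := by omega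
      by_cases h : j < 2 * n
      · rw [if_pos h, if_pos (by omega : j + 2 < 2 * (n+1)), h2]
      · rw [if_neg h, if_neg (by omega)]

lemma altL_mem_lang (n : ℕ) : wof (altL n) ∈ A19.lang := by
  refine ⟨(fun k => if k < 2 * n then (if k % 2 = 0 then 0 else 1) else if k = 2 * n then 0 else 2 :
      ℕ → Fin 3), ⟨?_, ?_⟩, ?_⟩
  · by_cases h : 0 < 2 * n <;> simp [A19_mem_empty', A19_mem_single, A19_mem_single', A19, h] <;> omega
  · intro i
    rw [wof_altL]
    by_cases h : i < 2 * n
    · rcases Nat.even_or_odd i with he | ho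
      · have h2 : i % 2 = 0 := Nat.even_iff.mp he
        have h3 : (i+1) % 2 = 1 := by omega
        by_cases h4 : i + 1 < 2 * n
        · simp [A19_mem_empty', A19_mem_single, A19_mem_single', A19, h, h2, h3, h4]
        · have : i + 1 = 2*n ∨ ¬ (i+1 = 2*n) := em _
          rcases this with h5 | h5
          · exfalso; omega
          · exfalso; omega
      · have h2 : i % 2 = 1 := Nat.odd_iff.mp ho
        have h4 : i + 1 ≤ 2 * n := h
        by_cases h5 : i + 1 < 2 * n
        · have : (i+1) % 2 = 0 := by omega
          simp [A19_mem_empty', A19_mem_single, A19_mem_single', A19, h, h2, h5, this]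
        · have h6 : i + 1 = 2 * n := by omega
          simp [A19_mem_empty', A19_mem_single, A19_mem_single', A19, h, h2, h5, h6]
    · by_cases h2 : i = 2 * n
      · simp [A19_mem_empty', A19_mem_single, A19_mem_single', A19, h, h2]
      · have : ¬ i + 1 = 2 * n := by omega
        simp [A19_mem_empty', A19_mem_single, A19_mem_single', A19, h, h2, this]; omega
  · intro m
    refine ⟨max m (2*n+1), le_max_left _ _, ?_⟩
    have h1 : ¬ max m (2*n+1) < 2*n := by have := le_max_right m (2*n+1); omega
    have h2 : ¬ max m (2*n+1) = 2*n := by have := le_max_right m (2*n+1); omega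
    simp [A19_mem_empty', A19_mem_single, A19_mem_single', A19, h1, h2]

lemma fin3_cases (x : Fin 3) : x = 0 ∨ x = 1 ∨ x = 2 := by omega

lemma lang_sub (w : ℕ → Fin 3) (hw : w ∈ A19.lang) : ∃ n, w = wof (altL n) := by
  obtain ⟨ρ, ⟨hinit, hstep⟩, hacc⟩ := hw
  change ℕ → Fin 3 at ρ
  have hinit' : ρ 0 = 0 := hinit
  -- once in state 2, stay in state 2 and read letter 2
  have h2 : ∀ m, ρ m = 2 → ρ (m + 1) = 2 ∧ w m = 2 := by
    intro m hm
    have := hstep m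
    rw [hm] at this
    rcases fin3_cases (w m) with h | h | h <;> simp [A19, h] at this <;> tauto
  have hex : ∃ m, ρ m = 2 := by
    obtain ⟨m, _, hm⟩ := hacc 0
    exact ⟨m, hm⟩
  set N := Nat.find hex with hNdef
  have hN : ρ N = 2 := Nat.find_spec hex
  have hmin : ∀ k, k < N → ρ k ≠ 2 := fun k hk => Nat.find_min hex hk
  have hNpos : 0 < N := by
    rcases Nat.eq_zero_or_pos N with h | h
    · exfalso; rw [h] at hN; rw [hinit'] at hN; exact absurd hN (by decide)
    · exact h
  -- states alternate before N
  have hstate : ∀ k, k < N → ρ k = if k % 2 = 0 then 0 else 1 := by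
    intro k
    induction k with
    | zero => intro _; simpa using hinit'
    | succ k ih =>
      intro hk
      have hkN : k < N := by omega
      have hρk := ih hkN
      have hs := hstep k
      rw [hρk] at hs
      have hne : ρ (k + 1) ≠ 2 := hmin _ hk
      rcases fin3_cases (w k) with h | h | h <;>
        by_cases hp : k % 2 = 0 <;>
        have hp1 : (k+1) % 2 = 0 ∨ (k+1) % 2 = 1 := by omega
      all_goals simp [A19_mem_empty, A19_mem_empty', A19_mem_single, A19_mem_single', A19, h, hp] at hs ⊢
      all_goals first
        | exact absurd hs hne
        | omega
        | (rw [if_neg (by omega)]; exact hs)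
        | (rw [if_pos (by omega)]; exact hs)
        | exact hs
  -- letters alternate strictly before N - 1
  have hlet : ∀ k, k + 1 < N → w k = if k % 2 = 0 then 0 else 1 := by
    intro k hk
    have hρk := hstate k (by omega)
    have hρk1 := hstate (k+1) hk
    have hs := hstep k
    rw [hρk] at hs
    rcases fin3_cases (w k) with h | h | h <;> by_cases hp : k % 2 = 0 <;>
      simp [A19_mem_empty, A19_mem_empty', A19_mem_single, A19_mem_single', A19, h, hp, Nat.succ_mod_two_eq_zero_iff, Nat.succ_mod_two_eq_one_iff] at hs hρk1 ⊢ <;>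
      simp [hρk1] at hs <;> omega
  -- the transition into state 2
  have hlast : (N - 1) % 2 = 0 ∧ w (N - 1) = 2 := by
    have hs := hstep (N - 1)
    have hN1 : N - 1 + 1 = N := by omega
    rw [hN1, hN] at hs
    have hρ := hstate (N-1) (by omega)
    rw [hρ] at hs
    rcases fin3_cases (w (N-1)) with h | h | h <;> by_cases hp : (N-1) % 2 = 0 <;>
      simp [A19_mem_empty', A19_mem_single, A19_mem_single', A19, h, hp] at hs ⊢ <;> tauto
  -- state 2 forever after N
  have h2f : ∀ k, N ≤ k → ρ k = 2 := by
    intro k hk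
    induction k with
    | zero => omega
    | succ k ih =>
      rcases Nat.lt_or_ge N (k+1) with h | h
      · exact (h2 k (ih (by omega))).1
      · have : N = k + 1 := by omega
        rw [← this]; exact hN
  have hc : ∀ k, N - 1 ≤ k → w k = 2 := by
    intro k hk
    rcases Nat.lt_or_ge k N with h | h
    · have : k = N - 1 := by omega
      rw [this]; exact hlast.2
    · exact (h2 k (h2f k h)).2
  refine ⟨(N - 1) / 2, ?_⟩
  have hN1 : N - 1 = 2 * ((N - 1) / 2) := by omega
  funext i
  rw [wof_altL]
  by_cases hi : i < 2 * ((N - 1) / 2)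
  · have : i + 1 < N := by omega
    rw [if_pos hi]; exact hlet i this
  · rw [if_neg hi]; exact hc i (by omega)

lemma wof_cons_zero (a : Fin 3) (u : List (Fin 3)) : wof (a :: u) 0 = a := by
  simp [wof]

lemma wof_cons_succ (a : Fin 3) (u : List (Fin 3)) (j : ℕ) : wof (a :: u) (j + 1) = wof u j := by
  simp only [wof, List.length_cons]
  by_cases h : j < u.length
  · rw [dif_pos (by omega : j + 1 < u.length + 1), dif_pos h]
    simp
  · rw [dif_neg (by omega), dif_neg h]

lemma encard_wof (u : List (Fin 3)) (x : Fin 3) (hx : x ≠ 2) :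
    {i : ℕ | wof u i = x}.encard = u.count x := by
  induction u with
  | nil =>
    have : {i : ℕ | wof ([] : List (Fin 3)) i = x} = ∅ := by
      ext i; simp [wof, hx.symm]
    simp [this]
  | cons a u ih =>
    have hset : {i : ℕ | wof (a :: u) i = x} =
        (if a = x then {0} else ∅) ∪ ((· + 1) '' {i : ℕ | wof u i = x}) := by
      ext i
      cases i with
      | zero =>
        simp only [Set.mem_setOf_eq, wof_cons_zero, Set.mem_union, Set.mem_image]
        by_cases h : a = x <;> simp [h]
      | succ j =>
        simp only [Set.mem_setOf_eq, wof_cons_succ, Set.mem_union, Set.mem_image]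
        constructor
        · intro h; exact Or.inr ⟨j, h, rfl⟩
        · rintro (h | ⟨k, hk, hki⟩)
          · by_cases h' : a = x <;> simp [h'] at h
          · obtain rfl : k = j := by omega
            exact hk
    rw [hset]
    have hdisj : Disjoint (if a = x then ({0} : Set ℕ) else ∅)
        ((· + 1) '' {i : ℕ | wof u i = x}) := by
      by_cases h : a = x <;> simp [h, Set.disjoint_left]
    rw [Set.encard_union_eq hdisj, (add_left_injective 1).encard_image _, ih]
    by_cases h : a = x <;> simp [h, List.count_cons, add_comm]

lemma encard_wof_two (u : List (Fin 3)) : {i : ℕ | wof u i = 2}.encard = ⊤ := by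
  have hsub : Set.Ici u.length ⊆ {i : ℕ | wof u i = 2} := by
    intro i hi
    simp only [Set.mem_setOf_eq, wof]
    rw [dif_neg (by exact Nat.not_lt.mpr hi)]
  exact ((Set.Ici_infinite _).mono hsub).encard_eq

lemma parikh_wof (u : List (Fin 3)) (x : Fin 3) :
    parikhInf (wof u) x = if x = 2 then ⊤ else (u.count x : ℕ∞) := by
  by_cases h : x = 2
  · subst h; simp [parikhInf, encard_wof_two]
  · simp [parikhInf, h, encard_wof u x h]

lemma mem_J_iff (w : ℕ → Fin 3) :
    w ∈ JumpLang A19 ↔ ∃ u : List (Fin 3), u.count 0 = u.count 1 ∧ w = wof u := by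
  constructor
  · rintro ⟨w', hpar, hw'⟩
    obtain ⟨n, rfl⟩ := lang_sub w' hw'
    have hp : ∀ x : Fin 3, parikhInf w x = if x = 2 then ⊤ else ((altL n).count x : ℕ∞) := by
      intro x; rw [← congrFun hpar x, parikh_wof]
    have h0 : {i : ℕ | w i = 0}.encard = (n : ℕ∞) := by
      have := hp 0; simpa [parikhInf, altL_count] using this
    have h1 : {i : ℕ | w i = 1}.encard = (n : ℕ∞) := by
      have := hp 1; simpa [parikhInf, altL_count] using this
    have hf0 : {i : ℕ | w i = 0}.Finite := by
      rw [← Set.encard_ne_top_iff, h0]; simp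
    have hf1 : {i : ℕ | w i = 1}.Finite := by
      rw [← Set.encard_ne_top_iff, h1]; simp
    obtain ⟨N, hN⟩ := (hf0.union hf1).bddAbove
    have hwof : w = wof (List.ofFn (fun i : Fin (N + 1) => w i)) := by
      funext i
      by_cases hi : i < N + 1
      · simp only [wof, List.length_ofFn]
        rw [dif_pos hi, List.get_ofFn]
        simp
      · have hi0 : w i = 2 := by
          rcases fin3_cases (w i) with h | h | h
          · exact absurd (hN (Or.inl h)) (by omega)
          · exact absurd (hN (Or.inr h)) (by omega)
          · exact h
        simp only [wof, List.length_ofFn]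
        rw [dif_neg hi]
        exact hi0
    refine ⟨List.ofFn (fun i : Fin (N + 1) => w i), ?_, hwof⟩
    have hc0 : ((List.ofFn (fun i : Fin (N + 1) => w i)).count 0 : ℕ∞) = (n : ℕ∞) := by
      rw [← encard_wof _ 0 (by omega), ← hwof]; exact h0
    have hc1 : ((List.ofFn (fun i : Fin (N + 1) => w i)).count 1 : ℕ∞) = (n : ℕ∞) := by
      rw [← encard_wof _ 1 (by omega), ← hwof]; exact h1
    rw [Nat.cast_inj] at hc0 hc1
    rw [hc0, hc1]
  · rintro ⟨u, hcount, rfl⟩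
    refine ⟨wof (altL (u.count 0)), ?_, altL_mem_lang _⟩
    funext x
    rw [parikh_wof, parikh_wof]
    rcases fin3_cases x with h | h | h <;> simp [h, altL_count, hcount]

def wab (p q : ℕ) : ℕ → Fin 3 := fun k => if k < p then 0 else if k < p + q then 1 else 2

lemma wab_eq (p q : ℕ) :
    wab p q = wof (List.replicate p (0 : Fin 3) ++ List.replicate q 1) := by
  funext k
  simp only [wab, wof, List.length_append, List.length_replicate]
  by_cases h : k < p + q
  · rw [dif_pos h]
    by_cases h1 : k < p
    · rw [if_pos h1, List.get_eq_getElem,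
        List.getElem_append_left (by simpa using h1), List.getElem_replicate]
    · rw [if_neg h1, if_pos h, List.get_eq_getElem,
        List.getElem_append_right (by simpa using h1), List.getElem_replicate]
  · rw [dif_neg h, if_neg (by omega), if_neg (by omega)]

lemma wab_count0 (p q : ℕ) :
    (List.replicate p (0 : Fin 3) ++ List.replicate q 1).count 0 = p := by
  simp [List.count_append, List.count_replicate]

lemma wab_count1 (p q : ℕ) :
    (List.replicate p (0 : Fin 3) ++ List.replicate q 1).count 1 = q := by
  simp [List.count_append, List.count_replicate]

lemma wab_mem_J (p : ℕ) : wab p p ∈ JumpLang A19 := by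
  rw [mem_J_iff]
  exact ⟨_, by rw [wab_count0, wab_count1], wab_eq p p⟩

lemma not_regular : ¬ ∃ B : BuchiAutomaton (Fin 3), B.lang = JumpLang A19 := by
  rintro ⟨B, hB⟩
  set n := Fintype.card B.Q with hn
  have hw : wab (n + 1) (n + 1) ∈ B.lang := by rw [hB]; exact wab_mem_J (n + 1)
  obtain ⟨ρ, ⟨hinit, hstep⟩, hacc⟩ := hw
  obtain ⟨a, b, hab, hfab⟩ := Fintype.exists_ne_map_eq_of_card_lt
    (fun k : Fin (n + 1) => ρ k) (by simp [hn])
  obtain ⟨i, j, hij, hjn, hρij⟩ : ∃ i j : ℕ, i < j ∧ j ≤ n ∧ ρ i = ρ j := by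
    rcases lt_or_gt_of_ne hab with h | h
    · exact ⟨a, b, h, by omega, hfab⟩
    · exact ⟨b, a, h, by omega, hfab.symm⟩
  set d := j - i with hd
  have hd1 : 1 ≤ d := by omega
  set w := wab (n + 1) (n + 1) with hwdef
  set w' : ℕ → Fin 3 := fun k => if k < j then w k else w (k - d) with hw'def
  have hw'lt : ∀ t, t < j → w' t = w t := by
    intro t ht; simp only [hw'def]; rw [if_pos ht]
  have hw'ge : ∀ t, j ≤ t → w' t = w (t - d) := by
    intro t ht; simp only [hw'def]; rw [if_neg (by omega)]
  set ρ' : ℕ → B.Q := fun t => if t ≤ j then ρ t else ρ (t - d) with hρ'def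
  have hρ'le : ∀ t, t ≤ j → ρ' t = ρ t := by
    intro t ht; simp only [hρ'def]; rw [if_pos ht]
  have hρ'gt : ∀ t, j < t → ρ' t = ρ (t - d) := by
    intro t ht; simp only [hρ'def]; rw [if_neg (by omega)]
  have hw'mem : w' ∈ B.lang := by
    refine ⟨ρ', ⟨by rw [hρ'le 0 (by omega)]; exact hinit, ?_⟩, ?_⟩
    · intro k
      rcases lt_trichotomy k j with h | h | h
      · rw [hρ'le (k + 1) h, hρ'le k (le_of_lt h), hw'lt k h]
        exact hstep k
      · subst h
        rw [hρ'gt (k + 1) (by omega), hρ'le k le_rfl, hw'ge k le_rfl]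
        have e1 : k + 1 - d = i + 1 := by omega
        have e2 : k - d = i := by omega
        rw [e1, e2, ← hρij]
        exact hstep i
      · rw [hρ'gt (k + 1) (by omega), hρ'gt k h, hw'ge k (le_of_lt h)]
        have e1 : k + 1 - d = (k - d) + 1 := by omega
        rw [e1]
        exact hstep (k - d)
    · intro m
      obtain ⟨m', hm', hmem⟩ := hacc (m + j + 1)
      refine ⟨m' + d, by omega, ?_⟩
      rw [hρ'gt (m' + d) (by omega)]
      have : m' + d - d = m' := by omega
      rw [this]
      exact hmem
  have hw'eq : w' = wab (n + 1 + d) (n + 1) := by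
    funext k
    by_cases h : k < j
    · rw [hw'lt k h]
      simp only [hwdef, wab]
      split_ifs <;> first | rfl | (exfalso; omega)
    · rw [hw'ge k (by omega)]
      have hkd : d ≤ k := by omega
      simp only [hwdef, wab]
      split_ifs <;> first | rfl | (exfalso; omega)
  rw [hB, hw'eq, mem_J_iff] at hw'mem
  obtain ⟨v, hcount, hv⟩ := hw'mem
  rw [wab_eq] at hv
  have h0 : (v.count 0 : ℕ∞) = ((n + 1 + d : ℕ) : ℕ∞) := by
    rw [← encard_wof v 0 (by omega), ← hv, encard_wof _ 0 (by omega), wab_count0]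
  have h1 : (v.count 1 : ℕ∞) = ((n + 1 : ℕ) : ℕ∞) := by
    rw [← encard_wof v 1 (by omega), ← hv, encard_wof _ 1 (by omega), wab_count1]
  rw [Nat.cast_inj] at h0 h1
  omega

/-- `J(A) = {u·c^ω : u ∈ Σ^*, #a(u) = #b(u)}`, and this language is not
`ω`-regular. -/
theorem jumpLang_A19_not_omega_regular :
    JumpLang A19 =
      {w : ℕ → Fin 3 | ∃ u : List (Fin 3), u.count 0 = u.count 1 ∧
        ∀ i : ℕ, w i = if h : i < u.length then u.get ⟨i, h⟩ else 2} ∧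
    ¬ ∃ B : BuchiAutomaton (Fin 3), B.lang = JumpLang A19 := by
  constructor
  · ext w
    simp only [Set.mem_setOf_eq]
    rw [mem_J_iff]
    constructor
    · rintro ⟨u, hc, rfl⟩
      exact ⟨u, hc, fun i => rfl⟩
    · rintro ⟨u, hc, hi⟩
      exact ⟨u, hc, funext hi⟩
  · exact not_regular
end
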